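/- arXiv:1701.05999 — 6 statements merged into one kernel-verified Lean document; each statement's English description precedes it below -/
import Mathlib

section
/- Every path graph (on any number of vertices ≥ 1) admits a closed-neighborhood conflict-free coloring with one color. -/
open SimpleGraph

/-- The closed neighborhood `N[v]` of a vertex. -/
def closedNbhd {V : Type*} (G : SimpleGraph V) (v : V) : Set V := insert v (G.neighborSet v)

/-- A closed-neighborhood conflict-free `k`-coloring. -/
def IsCFColoring {V : Type*} (G : SimpleGraph V) (k : ℕ) (c : V → Option (Fin k)) : Prop :=
  ∀ v : V, ∃ w ∈ closedNbhd G v, ∃ col : Fin k, c w = some col ∧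
    ∀ u ∈ closedNbhd G v, c u = some col → u = w

/-- every path graph on `n ≥ 1` vertices admits a closed-neighborhood
conflict-free coloring with one color. -/
theorem path_cf_one_colorable (n : ℕ) (hn : 1 ≤ n) :
    ∃ c : Fin n → Option (Fin 1), IsCFColoring (pathGraph n) 1 c := by
  classical
  set r : ℕ := if n % 3 = 1 then 0 else 1 with hr
  have hrcase : (n % 3 = 1 ∧ r = 0) ∨ (n % 3 ≠ 1 ∧ r = 1) := by
    by_cases h : n % 3 = 1 <;> simp [hr, h]
  refine ⟨fun i => if i.val % 3 = r then some 0 else none, fun v => ?_⟩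
  have hmem : ∀ u : Fin n, u ∈ closedNbhd (pathGraph n) v ↔
      (u.val = v.val ∨ u.val + 1 = v.val ∨ v.val + 1 = u.val) := by
    intro u
    constructor
    · rintro (h | h)
      · left; exact congrArg Fin.val h
      · have := (pathGraph_adj (u := v) (v := u)).mp h
        right; omega
    · intro h
      rcases h with h | h | h
      · left; exact Fin.ext h
      · right; exact (pathGraph_adj (u := v) (v := u)).mpr (Or.inr h)
      · right; exact (pathGraph_adj (u := v) (v := u)).mpr (Or.inl h)
  have hv : v.val < n := v.isLt
  -- find witness value
  have hex : ∃ wv : ℕ, wv < n ∧ (wv = v.val ∨ wv + 1 = v.val ∨ v.val + 1 = wv) ∧ wv % 3 = r := by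
    by_cases h1 : v.val % 3 = r
    · exact ⟨v.val, hv, Or.inl rfl, h1⟩
    by_cases h2 : (v.val + 1) % 3 = r
    · have hlt : v.val + 1 < n := by
        rcases hrcase with ⟨hn3, hr0⟩ | ⟨hn3, hr1⟩ <;> omega
      exact ⟨v.val + 1, hlt, Or.inr (Or.inr rfl), h2⟩
    · have hpos : 1 ≤ v.val := by
        rcases hrcase with ⟨hn3, hr0⟩ | ⟨hn3, hr1⟩ <;> omega
      refine ⟨v.val - 1, by omega, Or.inr (Or.inl (by omega)), ?_⟩
      rcases hrcase with ⟨hn3, hr0⟩ | ⟨hn3, hr1⟩ <;> omega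
  obtain ⟨wv, hwn, hwnear, hwr⟩ := hex
  refine ⟨⟨wv, hwn⟩, (hmem _).mpr hwnear, 0, by simp [hwr], ?_⟩
  intro u hu hcu
  have hun := (hmem u).mp hu
  by_cases h : u.val % 3 = r
  · apply Fin.ext
    show u.val = wv
    omega
  · simp [h] at hcu
end

section
/- Let G be a graph, v a vertex, and suppose the open neighborhood of v contains two vertex-disjoint copies of a graph H with χ_CF(H) = k, such that the vertices of these copies have no edges between the copies and no edges to any vertex of G other than v and vertices within their own copy. Then every closed-neighborhood conflict-free k-coloring of G assigns a color to v. -/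
open SimpleGraph

/-- `G` admits a closed-neighborhood conflict-free coloring with `k` colors. -/
def CFColorable {V : Type*} (G : SimpleGraph V) (k : ℕ) : Prop :=
  ∃ c : V → Option (Fin k), IsCFColoring G k c

/-- The conflict-free chromatic number: the least `k` admitting a conflict-free
`k`-coloring. -/
noncomputable def cfChromaticNumber {V : Type*} (G : SimpleGraph V) : ℕ :=
  sInf {k | CFColorable G k}

/-- An induced copy of `H` inside `G`, contained in the set `A`, all of whose vertices are
adjacent (in `G`) only to vertices of the copy itself or vertices of `attach`. -/
structure CopyIn {V W : Type*} (G : SimpleGraph V) (H : SimpleGraph W)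
    (A : Set V) (attach : Set V) where
  f : W ↪ V
  range_sub : Set.range f ⊆ A
  induced : ∀ a b : W, G.Adj (f a) (f b) ↔ H.Adj a b
  only : ∀ (a : W) (u : V), G.Adj (f a) u → u ∈ attach ∨ u ∈ Set.range f

/-- Two disjoint, independent (no edges in between) copies of `H` inside `G`,
contained in `A` and attached only to `attach`. -/
def TwoCopies {V W : Type*} (G : SimpleGraph V) (H : SimpleGraph W)
    (A : Set V) (attach : Set V) : Prop :=
  ∃ c₁ c₂ : CopyIn G H A attach,
    Disjoint (Set.range c₁.f) (Set.range c₂.f) ∧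
    ∀ a b : W, ¬ G.Adj (c₁.f a) (c₂.f b)

/-- if the open neighborhood of `v` contains two disjoint independent copies
of a graph `H` with `χ_CF(H) = k`, attached only to `v`, then every closed-neighborhood
conflict-free `k`-coloring of `G` colors `v`. -/
theorem cf_coloring_forces_vertex_colored {V W : Type*} (G : SimpleGraph V)
    (H : SimpleGraph W) (v : V) (k : ℕ)
    (hH : cfChromaticNumber H = k)
    (hcopies : TwoCopies G H (G.neighborSet v) {v})
    (c : V → Option (Fin k)) (hc : IsCFColoring G k c) :
    c v ≠ none := by
  intro hv
  obtain ⟨w, hw, col, hcw, huniq⟩ := hc v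
  obtain ⟨c₁, c₂, hdisj, _⟩ := hcopies
  have hpick : ∃ cp : CopyIn G H (G.neighborSet v) {v}, w ∉ Set.range cp.f := by
    by_cases h1 : w ∈ Set.range c₁.f
    · exact ⟨c₂, fun h2 => (hdisj.ne_of_mem h1 h2) rfl⟩
    · exact ⟨c₁, h1⟩
  obtain ⟨cp, hwcp⟩ := hpick
  obtain ⟨n, rfl⟩ : ∃ n, k = n + 1 := ⟨k - 1, (Nat.succ_pred_eq_of_pos col.pos).symm⟩
  have havoid : ∀ a : W, c (cp.f a) ≠ some col := by
    intro a ha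
    have hmem : cp.f a ∈ closedNbhd G v :=
      Set.mem_insert_of_mem _ (cp.range_sub (Set.mem_range_self a))
    exact hwcp ⟨a, huniq _ hmem ha⟩
  have hcf : CFColorable H n := by
    refine ⟨fun a => (c (cp.f a)).bind (finSuccEquiv' col), ?_⟩
    intro a
    obtain ⟨w', hw', col', hcw', huniq'⟩ := hc (cp.f a)
    obtain ⟨b, rfl⟩ : w' ∈ Set.range cp.f := by
      rcases hw' with rfl | hadj
      · exact Set.mem_range_self a
      · rcases cp.only a w' hadj with h | h
        · rw [Set.mem_singleton_iff] at h
          rw [h, hv] at hcw'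
          exact absurd hcw' (by simp)
        · exact h
    have hbnb : b ∈ closedNbhd H a := by
      rcases hw' with heq | hadj
      · rw [cp.f.injective heq]
        exact Set.mem_insert _ _
      · exact Set.mem_insert_of_mem _ (((cp.induced a b).mp hadj))
    have hcol' : col' ≠ col := fun h => havoid b (h ▸ hcw')
    obtain ⟨y, hy⟩ : ∃ y, finSuccEquiv' col col' = some y := by
      rcases h : finSuccEquiv' col col' with _ | y
      · exact absurd ((finSuccEquiv' col).injective (h.trans (finSuccEquiv'_symm_none col ▸
          (finSuccEquiv' col).apply_symm_apply none).symm)) hcol'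
      · exact ⟨y, rfl⟩
    refine ⟨b, hbnb, y, by show (c (cp.f b)).bind (finSuccEquiv' col) = some y
                           rw [hcw']; simpa using hy, ?_⟩
    intro u hu hcu
    have hcu' : (c (cp.f u)).bind (finSuccEquiv' col) = some y := hcu
    obtain ⟨x, hx, hx2⟩ : ∃ x, c (cp.f u) = some x ∧ finSuccEquiv' col x = some y := by
      rcases hxx : c (cp.f u) with _ | x
      · rw [hxx] at hcu'; simp at hcu'
      · rw [hxx] at hcu'; exact ⟨x, rfl, by simpa using hcu'⟩
    have hxcol : x = col' := (finSuccEquiv' col).injective (hx2.trans hy.symm)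
    have hmem : cp.f u ∈ closedNbhd G (cp.f a) := by
      rcases hu with rfl | hadj
      · exact Set.mem_insert _ _
      · exact Set.mem_insert_of_mem _ ((cp.induced a u).mpr hadj)
    exact cp.f.injective (huniq' _ hmem (hxcol ▸ hx))
  have h2 : cfChromaticNumber H ≤ n := Nat.sInf_le hcf
  omega
end

section
/- For every k ≥ 1, if a graph G has neither K_{k+2} nor K_{k+3}^{-3} (the complete graph on k+3 vertices with the three edges of one triangle removed) as a minor, then G admits a closed-neighborhood conflict-free k-coloring. -/
open SimpleGraph

/-- `HasMinor G H` : `H` is a minor of `G`. -/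
def HasMinor {V W : Type*} (G : SimpleGraph V) (H : SimpleGraph W) : Prop :=
  ∃ f : W → Set V,
    (∀ w, (f w).Nonempty) ∧
    (∀ w, (G.induce (f w)).Connected) ∧
    (Pairwise fun w w' => Disjoint (f w) (f w')) ∧
    ∀ ⦃w w'⦄, H.Adj w w' → ∃ a ∈ f w, ∃ b ∈ f w', G.Adj a b

/-- `K_n^{-3}`: the complete graph on `Fin n` with the three edges of the triangle on the
first three vertices removed. -/
def completeMinusTriangle (n : ℕ) : SimpleGraph (Fin n) where
  Adj i j := i ≠ j ∧ ¬(i.val < 3 ∧ j.val < 3)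
  symm := by constructor; intro i j ⟨h1, h2⟩; exact ⟨h1.symm, fun ⟨a, b⟩ => h2 ⟨b, a⟩⟩
  loopless := by constructor; intro i ⟨h1, _⟩; exact h1 rfl

namespace CFAux


variable {V : Type*} {G : SimpleGraph V}

/-- `u` is in the closed neighborhood of `v`. -/
def NbA (G : SimpleGraph V) (v u : V) : Prop := u = v ∨ G.Adj v u

lemma nbA_refl (G : SimpleGraph V) (v : V) : NbA G v v := Or.inl rfl

lemma NbA.symm {v u : V} (h : NbA G v u) : NbA G u v := by
  rcases h with h | h
  · exact Or.inl h.symm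
  · exact Or.inr h.symm

/-- There is a walk from `a` to `b` staying inside `A`. -/
def WalkIn (G : SimpleGraph V) (A : Set V) (a b : V) : Prop :=
  ∃ w : G.Walk a b, ∀ x ∈ w.support, x ∈ A

/-- `A` is connected (in the walk sense). -/
def ConnOn (G : SimpleGraph V) (A : Set V) : Prop := ∀ a ∈ A, ∀ b ∈ A, WalkIn G A a b

lemma walkIn_refl {A : Set V} {a : V} (ha : a ∈ A) : WalkIn G A a a :=
  ⟨Walk.nil, by simp [ha]⟩

lemma WalkIn.symm {A : Set V} {a b : V} (h : WalkIn G A a b) : WalkIn G A b a := by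
  obtain ⟨w, hw⟩ := h
  exact ⟨w.reverse, by intro x hx; rw [Walk.support_reverse] at hx; exact hw x (List.mem_reverse.1 hx)⟩

lemma WalkIn.trans {A : Set V} {a b c : V} (h : WalkIn G A a b) (h' : WalkIn G A b c) :
    WalkIn G A a c := by
  obtain ⟨w, hw⟩ := h; obtain ⟨w', hw'⟩ := h'
  refine ⟨w.append w', ?_⟩
  intro x hx
  rw [Walk.support_append] at hx
  rcases List.mem_append.1 hx with hx | hx
  · exact hw x hx
  · exact hw' x (List.mem_of_mem_tail hx)

lemma walkIn_of_adj {A : Set V} {a b : V} (h : G.Adj a b) (ha : a ∈ A) (hb : b ∈ A) :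
    WalkIn G A a b := ⟨h.toWalk, by simp [Walk.support_cons, ha, hb]⟩

lemma walkIn_of_nbA {A : Set V} {a b : V} (h : NbA G a b) (ha : a ∈ A) (hb : b ∈ A) :
    WalkIn G A a b := by
  rcases h with rfl | h
  · exact walkIn_refl ha
  · exact walkIn_of_adj h ha hb

lemma WalkIn.mono {A B : Set V} (hAB : A ⊆ B) {a b : V} (h : WalkIn G A a b) : WalkIn G B a b := by
  obtain ⟨w, hw⟩ := h; exact ⟨w, fun x hx => hAB (hw x hx)⟩

lemma WalkIn.mem_left {A : Set V} {a b : V} (h : WalkIn G A a b) : a ∈ A := by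
  obtain ⟨w, hw⟩ := h; exact hw a w.start_mem_support

lemma WalkIn.mem_right {A : Set V} {a b : V} (h : WalkIn G A a b) : b ∈ A := by
  obtain ⟨w, hw⟩ := h; exact hw b w.end_mem_support

/-- the closed star of `d` inside `A` is connected -/
lemma connOn_star (A : Set V) {d : V} (hdA : d ∈ A) : ConnOn G {u | u ∈ A ∧ NbA G d u} := by
  have hd : ∀ a ∈ {u | u ∈ A ∧ NbA G d u}, WalkIn G {u | u ∈ A ∧ NbA G d u} d a := by
    intro a ⟨haA, ha⟩
    rcases ha with rfl | ha
    · exact walkIn_refl ⟨haA, nbA_refl G a⟩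
    · exact walkIn_of_adj ha ⟨hdA, nbA_refl G d⟩ ⟨haA, Or.inr ha⟩
  intro a ha b hb
  exact (hd a ha).symm.trans (hd b hb)




/-- a minor model of `H` with all branch sets inside `A`. -/
def ModelIn (G : SimpleGraph V) (A : Set V) {W : Type} (H : SimpleGraph W) : Prop :=
  ∃ f : W → Set V, (∀ w, f w ⊆ A) ∧ (∀ w, (f w).Nonempty) ∧ (∀ w, ConnOn G (f w)) ∧
    (Pairwise fun w w' => Disjoint (f w) (f w')) ∧
    ∀ ⦃w w'⦄, H.Adj w w' → ∃ a ∈ f w, ∃ b ∈ f w', G.Adj a b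

lemma ModelIn.mono {A B : Set V} (hAB : A ⊆ B) {W : Type} {H : SimpleGraph W}
    (h : ModelIn G A H) : ModelIn G B H := by
  obtain ⟨f, h1, h2, h3, h4, h5⟩ := h
  exact ⟨f, fun w => (h1 w).trans hAB, h2, h3, h4, h5⟩

/-- walks inside a set give reachability in the induced graph -/
lemma reachable_induce_aux {s : Set V} {a b : V} (w : G.Walk a b)
    (hw : ∀ x ∈ w.support, x ∈ s) (ha : a ∈ s) (hb : b ∈ s) :
    (G.induce s).Reachable ⟨a, ha⟩ ⟨b, hb⟩ := by
  induction w with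
  | nil => rfl
  | @cons u x v hadj p ih =>
    have hx : x ∈ s := hw x (by simp [Walk.support_cons])
    have h1 : (G.induce s).Adj ⟨u, ha⟩ ⟨x, hx⟩ := hadj
    exact (h1.reachable).trans (ih (fun y hy => hw y (by simp [Walk.support_cons]; exact Or.inr hy)) hx hb)

lemma reachable_induce {s : Set V} {a b : V} (ha : a ∈ s) (hb : b ∈ s)
    (h : WalkIn G s a b) : (G.induce s).Reachable ⟨a, ha⟩ ⟨b, hb⟩ := by
  obtain ⟨w, hw⟩ := h
  exact reachable_induce_aux w hw ha hb

lemma connected_induce {s : Set V} (h : ConnOn G s) (hne : s.Nonempty) :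
    (G.induce s).Connected := by
  have : Nonempty ↥s := ⟨⟨hne.choose, hne.choose_spec⟩⟩
  refine ⟨?_⟩
  rintro ⟨a, ha⟩ ⟨b, hb⟩
  exact reachable_induce ha hb (h a ha b hb)

lemma ModelIn.hasMinor {W : Type} {H : SimpleGraph W} (h : ModelIn G Set.univ H) :
    HasMinor G H := by
  obtain ⟨f, _, hfne, hfconn, hfdisj, hfadj⟩ := h
  exact ⟨f, hfne, fun w => connected_induce (hfconn w) (hfne w), hfdisj, hfadj⟩

lemma modelIn_addApex {m : ℕ} {U X A : Set V} (H : SimpleGraph (Fin m))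
    (H' : SimpleGraph (Fin (m + 1)))
    (hadj_cast : ∀ ⦃i j : Fin m⦄, H'.Adj i.castSucc j.castSucc → H.Adj i j)
    (hUA : U ⊆ A) (hXA : X ⊆ A) (hXU : ∀ x ∈ X, x ∉ U)
    (hXconn : ConnOn G X) (hXne : X.Nonempty)
    (hcov : ∀ u ∈ U, ∃ x ∈ X, G.Adj u x)
    (h : ModelIn G U H) : ModelIn G A H' := by
  classical
  obtain ⟨f, hfA, hfne, hfconn, hfdisj, hfadj⟩ := h
  refine ⟨Fin.lastCases X (fun i => f i), ?_, ?_, ?_, ?_, ?_⟩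
  · intro w
    induction w using Fin.lastCases with
    | last => simpa using hXA
    | cast i => simpa using (hfA i).trans hUA
  · intro w
    induction w using Fin.lastCases with
    | last => simpa using hXne
    | cast i => simpa using hfne i
  · intro w
    induction w using Fin.lastCases with
    | last => simpa using hXconn
    | cast i => simpa using hfconn i
  · intro w w' hww
    induction w using Fin.lastCases with
    | last =>
      induction w' using Fin.lastCases with
      | last => exact absurd rfl hww
      | cast j =>
        simp only [Fin.lastCases_last, Fin.lastCases_castSucc]
        exact Set.disjoint_left.2 (fun x hx hx' => hXU x hx (hfA j hx'))
    | cast i =>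
      induction w' using Fin.lastCases with
      | last =>
        simp only [Fin.lastCases_last, Fin.lastCases_castSucc]
        exact Set.disjoint_left.2 (fun x hx hx' => hXU x hx' (hfA i hx))
      | cast j =>
        simp only [Fin.lastCases_castSucc]
        exact hfdisj (fun hc => hww (by rw [hc]))
  · intro w w' hww
    induction w using Fin.lastCases with
    | last =>
      induction w' using Fin.lastCases with
      | last => exact absurd (H'.loopless.irrefl _) (fun h => h hww)
      | cast j =>
        obtain ⟨u, hu⟩ := hfne j
        obtain ⟨x, hx, hxu⟩ := hcov u (hfA j hu)
        exact ⟨x, by simpa using hx, u, by simpa using hu, hxu.symm⟩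
    | cast i =>
      induction w' using Fin.lastCases with
      | last =>
        obtain ⟨u, hu⟩ := hfne i
        obtain ⟨x, hx, hxu⟩ := hcov u (hfA i hu)
        exact ⟨u, by simpa using hu, x, by simpa using hx, hxu⟩
      | cast j =>
        obtain ⟨a, ha, b, hb, hab⟩ := hfadj (hadj_cast hww)
        exact ⟨a, by simpa using ha, b, by simpa using hb, hab⟩

lemma ext_top {m : ℕ} {U X A : Set V}
    (hUA : U ⊆ A) (hXA : X ⊆ A) (hXU : ∀ x ∈ X, x ∉ U)
    (hXconn : ConnOn G X) (hXne : X.Nonempty)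
    (hcov : ∀ u ∈ U, ∃ x ∈ X, G.Adj u x)
    (h : ModelIn G U (⊤ : SimpleGraph (Fin m))) :
    ModelIn G A (⊤ : SimpleGraph (Fin (m + 1))) := by
  refine modelIn_addApex ⊤ ⊤ ?_ hUA hXA hXU hXconn hXne hcov h
  intro i j hij
  simp only [top_adj] at hij ⊢
  exact fun hc => hij (by rw [hc])

lemma ext_cmt {m : ℕ} {U X A : Set V}
    (hUA : U ⊆ A) (hXA : X ⊆ A) (hXU : ∀ x ∈ X, x ∉ U)
    (hXconn : ConnOn G X) (hXne : X.Nonempty)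
    (hcov : ∀ u ∈ U, ∃ x ∈ X, G.Adj u x)
    (h : ModelIn G U (completeMinusTriangle m)) :
    ModelIn G A (completeMinusTriangle (m + 1)) := by
  refine modelIn_addApex _ _ ?_ hUA hXA hXU hXconn hXne hcov h
  intro i j hij
  obtain ⟨h1, h2⟩ := hij
  refine ⟨fun hc => h1 (by rw [hc]), ?_⟩
  simpa using h2

/-- conflict-free condition at `v`, relative to `A`. -/
def CFat (G : SimpleGraph V) (A : Set V) {k : ℕ} (c : V → Option (Fin k)) (v : V) : Prop :=
  ∃ w, w ∈ A ∧ NbA G v w ∧ ∃ col, c w = some col ∧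
    ∀ u, u ∈ A → NbA G v u → c u = some col → u = w

/-- a conflict-free coloring of the part `A` of `G`, leaving everything else uncolored. -/
def CFcol (G : SimpleGraph V) (A : Set V) (k : ℕ) (c : V → Option (Fin k)) : Prop :=
  (∀ v, v ∉ A → c v = none) ∧ ∀ v ∈ A, CFat G A c v

open scoped Classical in
lemma glue_split {k : ℕ} (A C : Finset V) (hCA : C ⊆ A)
    (hclosed : ∀ v ∈ C, ∀ u ∈ A, NbA G v u → u ∈ C)
    {c₁ c₂ : V → Option (Fin k)}
    (h1 : CFcol G ↑C k c₁) (h2 : CFcol G ↑(A \ C) k c₂) :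
    CFcol G ↑A k (fun v => if v ∈ C then c₁ v else c₂ v) := by
  have hmemD : ∀ v, v ∈ A → v ∉ C → ∀ u, u ∈ A → NbA G v u → u ∉ C := by
    intro v _ hvC u hu hnb huC
    exact hvC (hclosed u huC v (by simpa using (by assumption : v ∈ A)) hnb.symm)
  constructor
  · intro v hv
    have hvA : v ∉ A := by simpa using hv
    have hvC : v ∉ C := fun h => hvA (hCA h)
    simp only [hvC, if_false]
    refine h2.1 v ?_
    simp only [Finset.coe_sdiff, Set.mem_diff, Finset.mem_coe]
    rintro ⟨hvA2, -⟩
    exact hvA hvA2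
  · intro v hv
    have hvA : v ∈ A := by simpa using hv
    by_cases hvC : v ∈ C
    · obtain ⟨w, hwC, hnb, col, hcol, huniq⟩ := h1.2 v hvC
      have hwC' : w ∈ C := by simpa using hwC
      refine ⟨w, by simpa using hCA hwC', hnb, col, by simp [hwC', hcol], ?_⟩
      intro u hu hnbu hcu
      have huA : u ∈ A := by simpa using hu
      have huC : u ∈ C := hclosed v hvC u huA hnbu
      refine huniq u (by simpa using huC) hnbu ?_
      simpa [huC] using hcu
    · have hvD : v ∈ (↑(A \ C) : Set V) := by
        simp only [Finset.coe_sdiff, Set.mem_diff, Finset.mem_coe]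
        exact ⟨hvA, hvC⟩
      obtain ⟨w, hwD, hnb, col, hcol, huniq⟩ := h2.2 v hvD
      obtain ⟨hwA, hwC⟩ : w ∈ (↑A : Set V) ∧ w ∉ C := by
        simpa [Finset.coe_sdiff, Set.mem_diff] using hwD
      refine ⟨w, hwA, hnb, col, by simp [hwC, hcol], ?_⟩
      intro u hu hnbu hcu
      have huA : u ∈ A := by simpa using hu
      have huC : u ∉ C := hmemD v hvA hvC u huA hnbu
      refine huniq u (by simp [Finset.coe_sdiff, Set.mem_diff, huA, huC]) hnbu ?_
      simpa [huC] using hcu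

open scoped Classical in
lemma conn_or_split (A : Finset V) (hne : A.Nonempty) :
    ConnOn G ↑A ∨ ∃ C : Finset V, C ⊆ A ∧ C.Nonempty ∧ C ≠ A ∧
      (∀ v ∈ C, ∀ u ∈ A, NbA G v u → u ∈ C) := by
  obtain ⟨a, ha⟩ := hne
  set C := A.filter (fun b => WalkIn G ↑A a b) with hC
  have haC : a ∈ C := by
    simp only [hC, Finset.mem_filter]
    exact ⟨ha, walkIn_refl (by simpa using ha)⟩
  by_cases hCA : C = A
  · left
    intro b hb b' hb'
    have hwb : WalkIn G ↑A a b := by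
      have hb2 : b ∈ C := by rw [hCA]; exact_mod_cast hb
      exact (Finset.mem_filter.1 hb2).2
    have hwb' : WalkIn G ↑A a b' := by
      have hb2 : b' ∈ C := by rw [hCA]; exact_mod_cast hb'
      exact (Finset.mem_filter.1 hb2).2
    exact hwb.symm.trans hwb'
  · right
    refine ⟨C, Finset.filter_subset _ _, ⟨a, haC⟩, hCA, ?_⟩
    intro v hv u hu hnb
    obtain ⟨hvA, hvw⟩ := Finset.mem_filter.1 hv
    refine Finset.mem_filter.2 ⟨hu, hvw.trans (walkIn_of_nbA hnb ?_ ?_)⟩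
    · simpa using hvA
    · simpa using hu

/-- the union of closed stars of `D` inside `A`. -/
def starsOf (G : SimpleGraph V) (A : Set V) (D : Finset V) : Set V :=
  {x | x ∈ A ∧ ∃ d ∈ D, NbA G d x}

open scoped Classical in
/-- Existence of a maximal "greedily connected" 2-packing: closed neighborhoods of `D`
(relative to `A`) are pairwise disjoint, their union `X` is connected, and every vertex of
`A` is within distance 2 of `D`. -/
lemma exists_packing (A : Finset V) (hconn : ConnOn G ↑A) (hne : A.Nonempty) :
    ∃ D : Finset V, ↑D ⊆ (A : Set V) ∧ D.Nonempty ∧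
      (∀ d ∈ D, ∀ d' ∈ D, d ≠ d' → ∀ z ∈ (A : Set V), NbA G d z → ¬ NbA G d' z) ∧
      ConnOn G (starsOf G ↑A D) ∧
      (∀ v ∈ (A : Set V), v ∉ starsOf G ↑A D →
        ∃ u, G.Adj v u ∧ u ∈ starsOf G ↑A D) := by
  set 𝒢 : Finset V → Prop := fun D => D ⊆ A ∧ D.Nonempty ∧
      (∀ d ∈ D, ∀ d' ∈ D, d ≠ d' → ∀ z ∈ (A : Set V), NbA G d z → ¬ NbA G d' z) ∧
      ConnOn G (starsOf G ↑A D) with h𝒢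
  obtain ⟨r, hr⟩ := hne
  have hGr : 𝒢 {r} := by
    refine ⟨by simpa using hr, ⟨r, by simp⟩, ?_, ?_⟩
    · intro d hd d' hd' hdd
      simp only [Finset.mem_singleton] at hd hd'
      exact absurd (hd.trans hd'.symm) hdd
    · have : starsOf G ↑A {r} = {u | u ∈ (A : Set V) ∧ NbA G r u} := by
        ext x; simp [starsOf]
      rw [this]
      exact connOn_star _ (by simpa using hr)
  set cands := (A.powerset).filter 𝒢 with hcands
  have hcne : cands.Nonempty := by
    refine ⟨{r}, ?_⟩
    simp only [hcands, Finset.mem_filter, Finset.mem_powerset]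
    exact ⟨by simpa using hr, hGr⟩
  obtain ⟨D, hDmem, hDmax⟩ := Finset.exists_max_image cands Finset.card hcne
  obtain ⟨hDA, hD⟩ := Finset.mem_filter.1 hDmem
  have hDA' : D ⊆ A := Finset.mem_powerset.1 hDA
  obtain ⟨-, hDne, hpack, hXconn⟩ := hD
  set X := starsOf G ↑A D with hX
  have hDX : ∀ d ∈ D, d ∈ X := fun d hd => ⟨by simpa using hDA' hd, d, hd, Or.inl rfl⟩
  refine ⟨D, by exact_mod_cast (Finset.coe_subset.2 hDA'), hDne, hpack, hXconn, ?_⟩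
  by_contra hbad
  push_neg at hbad
  obtain ⟨v₀, hv₀A, hv₀X, hv₀n⟩ := hbad
  -- the set of "bad" vertices
  set B := A.filter (fun v => v ∉ X ∧ ∀ z, G.Adj v z → z ∉ X) with hB
  have hBne : B.Nonempty := by
    refine ⟨v₀, ?_⟩
    simp only [hB, Finset.mem_filter]
    refine ⟨by simpa using hv₀A, hv₀X, ?_⟩
    intro z hz hzX
    exact hv₀n z hz hzX
  obtain ⟨r₀, hr₀D⟩ := hDne
  have hr₀X : r₀ ∈ X := hDX r₀ hr₀D
  -- distance to r₀ within A
  set P : V → ℕ → Prop := fun v n => ∃ w : G.Walk v r₀, w.length = n ∧ ∀ x ∈ w.support, x ∈ (A : Set V) with hP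
  have hex : ∀ v ∈ A, ∃ n, P v n := by
    intro v hv
    obtain ⟨w, hw⟩ := hconn v (by simpa using hv) r₀ (by simpa using hDA' hr₀D)
    exact ⟨w.length, w, rfl, hw⟩
  set dA : V → ℕ := fun v => if h : ∃ n, P v n then Nat.find h else 0 with hdA
  obtain ⟨v', hv'B, hv'min⟩ := Finset.exists_min_image B dA hBne
  obtain ⟨hv'A, hv'X, hv'n⟩ := Finset.mem_filter.1 hv'B
  have hexv' : ∃ n, P v' n := hex v' hv'A
  have hdv' : dA v' = Nat.find hexv' := by simp [hdA, hexv']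
  obtain ⟨w, hwlen, hwsup⟩ := Nat.find_spec hexv'
  -- v' ≠ r₀
  cases w with
  | nil => exact hv'X hr₀X
  | @cons _ u _ hadj w' =>
    have huA : u ∈ (A : Set V) := hwsup u (by simp [Walk.support_cons])
    have hw'sup : ∀ x ∈ w'.support, x ∈ (A : Set V) := by
      intro x hx; exact hwsup x (by simp [Walk.support_cons]; exact Or.inr hx)
    have hPu : P u w'.length := ⟨w', rfl, hw'sup⟩
    have hexu : ∃ n, P u n := ⟨w'.length, hPu⟩
    have hdu : dA u ≤ w'.length := by
      simp only [hdA, hexu, dif_pos]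
      exact Nat.find_le hPu
    have hltu : dA u < dA v' := by
      rw [hdv', ← hwlen]
      simp only [Walk.length_cons]
      omega
    -- u is not bad
    have huB : u ∉ B := by
      intro huB
      exact absurd (hv'min u huB) (by omega)
    have huX : u ∉ X := by
      intro huX
      exact hv'n u hadj huX
    obtain ⟨z, hz, hzX⟩ : ∃ z, G.Adj u z ∧ z ∈ X := by
      by_contra hc
      push_neg at hc
      exact huB (Finset.mem_filter.2 ⟨by simpa using huA, huX, hc⟩)
    -- now D ∪ {v'} is a strictly better good set
    have hv'D : v' ∉ D := fun h => hv'X (hDX v' h)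
    have hstar' : starsOf G ↑A (insert v' D) =
        X ∪ {x | x ∈ (A : Set V) ∧ NbA G v' x} := by
      ext x
      simp only [starsOf, Finset.mem_insert, Set.mem_union, Set.mem_setOf_eq, hX]
      constructor
      · rintro ⟨hxA, d, (rfl | hd), hnb⟩
        · exact Or.inr ⟨hxA, hnb⟩
        · exact Or.inl ⟨hxA, d, hd, hnb⟩
      · rintro (⟨hxA, d, hd, hnb⟩ | ⟨hxA, hnb⟩)
        · exact ⟨hxA, d, Or.inr hd, hnb⟩
        · exact ⟨hxA, v', Or.inl rfl, hnb⟩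
    have hnewpack : ∀ z₀ ∈ (A : Set V), NbA G v' z₀ → ∀ d ∈ D, ¬ NbA G d z₀ := by
      intro z₀ hz₀A hnb d hd hnb'
      have hz₀X : z₀ ∈ X := ⟨hz₀A, d, hd, hnb'⟩
      rcases hnb with rfl | hnb
      · exact hv'X hz₀X
      · exact hv'n z₀ hnb hz₀X
    have hG' : 𝒢 (insert v' D) := by
      refine ⟨Finset.insert_subset (by simpa using hv'A) hDA', ⟨v', by simp⟩, ?_, ?_⟩
      · intro d hd d' hd' hdd z₀ hz₀A hnb hnb'
        rcases Finset.mem_insert.1 hd with rfl | hdD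
        · exact hnewpack z₀ hz₀A hnb d' (by rcases Finset.mem_insert.1 hd' with rfl | h; exact absurd rfl hdd; exact h) hnb'
        · rcases Finset.mem_insert.1 hd' with rfl | hdD'
          · exact hnewpack z₀ hz₀A hnb' d hdD hnb
          · exact hpack d hdD d' hdD' hdd z₀ hz₀A hnb hnb'
      · -- connectivity of the enlarged union of stars
        rw [hstar']
        set S := {x | x ∈ (A : Set V) ∧ NbA G v' x} with hS
        have hXS : ∀ a ∈ X ∪ S, WalkIn G (X ∪ S) a v' := by
          have hv'S : v' ∈ S := ⟨hv'A, Or.inl rfl⟩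
          have huS : u ∈ S := ⟨huA, Or.inr hadj⟩
          have hzu : WalkIn G (X ∪ S) z v' := by
            refine (walkIn_of_adj hz.symm (Or.inl hzX) (Or.inr huS)).trans
              (walkIn_of_adj hadj.symm (Or.inr huS) (Or.inr hv'S))
          intro a ha
          rcases ha with ha | ha
          · exact ((hXconn a ha z hzX).mono (Set.subset_union_left)).trans hzu
          · rcases ha.2 with rfl | hnb
            · exact walkIn_refl (Or.inr hv'S)
            · exact walkIn_of_adj hnb.symm (Or.inr ⟨ha.1, ha.2⟩) (Or.inr hv'S)
        intro a ha b hb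
        exact (hXS a ha).trans (hXS b hb).symm
    have hmem' : insert v' D ∈ cands := by
      simp only [hcands, Finset.mem_filter, Finset.mem_powerset]
      exact ⟨Finset.insert_subset (by simpa using hv'A) hDA', hG'⟩
    have := hDmax _ hmem'
    rw [Finset.card_insert_of_notMem hv'D] at this
    omega

open scoped Classical in
lemma step_connected (m : ℕ)
    (IH : ∀ B : Finset V, ¬ ModelIn G ↑B (⊤ : SimpleGraph (Fin (m + 3))) →
      ¬ ModelIn G ↑B (completeMinusTriangle (m + 4)) →
      ∃ c : V → Option (Fin (m + 1)), CFcol G ↑B (m + 1) c)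
    (A : Finset V) (hconn : ConnOn G ↑A) (hne : A.Nonempty)
    (h1 : ¬ ModelIn G ↑A (⊤ : SimpleGraph (Fin (m + 4))))
    (h2 : ¬ ModelIn G ↑A (completeMinusTriangle (m + 5))) :
    ∃ c : V → Option (Fin (m + 2)), CFcol G ↑A (m + 2) c := by
  obtain ⟨D, hDA, hDne, hpack, hXconn, hcov⟩ := exists_packing A hconn hne
  set X := starsOf G ↑A D with hX
  have hXA : X ⊆ (A : Set V) := fun x hx => hx.1
  have hDX : ∀ d ∈ D, d ∈ X := fun d hd => ⟨hDA (by simpa using hd), d, hd, Or.inl rfl⟩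
  have hXne : X.Nonempty := by
    obtain ⟨d, hd⟩ := hDne
    exact ⟨d, hDX d hd⟩
  set U := A.filter (fun v => v ∉ X) with hU
  have hUA : (U : Set V) ⊆ (A : Set V) := by
    intro x hx
    simp only [hU, Finset.coe_filter, Set.mem_setOf_eq] at hx
    simpa using hx.1
  have hXU : ∀ x ∈ X, x ∉ (U : Set V) := by
    intro x hx hxU
    simp only [hU, Finset.coe_filter, Set.mem_setOf_eq] at hxU
    exact hxU.2 hx
  have hUcov : ∀ u ∈ (U : Set V), ∃ x ∈ X, G.Adj u x := by
    intro u hu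
    simp only [hU, Finset.coe_filter, Set.mem_setOf_eq] at hu
    obtain ⟨z, hz, hzX⟩ := hcov u (by simpa using hu.1) hu.2
    exact ⟨z, hzX, hz⟩
  have hU1 : ¬ ModelIn G ↑U (⊤ : SimpleGraph (Fin (m + 3))) := by
    intro h
    exact h1 (ext_top hUA hXA hXU hXconn hXne hUcov h)
  have hU2 : ¬ ModelIn G ↑U (completeMinusTriangle (m + 4)) := by
    intro h
    exact h2 (ext_cmt hUA hXA hXU hXconn hXne hUcov h)
  obtain ⟨c', hc'⟩ := IH U hU1 hU2
  refine ⟨fun v => if v ∈ D then some (Fin.last (m + 1)) else (c' v).map Fin.castSucc, ?_, ?_⟩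
  · intro v hv
    have hvD : v ∉ D := fun h => hv (hDA (by simpa using h))
    have hvU : v ∉ (U : Set V) := fun h => hv (hUA h)
    simp [hvD, hc'.1 v hvU]
  · intro v hv
    by_cases hvX : v ∈ X
    · obtain ⟨hvA, d, hd, hnb⟩ := hvX
      refine ⟨d, hDA (by simpa using hd), hnb.symm, Fin.last (m + 1), by simp [hd], ?_⟩
      intro u hu hnbu hcu
      by_cases huD : u ∈ D
      · by_contra hud
        exact hpack u huD d hd hud v hv hnbu.symm hnb
      · simp only [huD, if_false] at hcu
        obtain ⟨col', -, hcol'⟩ := Option.map_eq_some_iff.1 hcu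
        exact absurd hcol' (Fin.ne_of_lt (Fin.castSucc_lt_last col'))
    · have hvU : v ∈ (U : Set V) := by
        simp only [hU, Finset.coe_filter, Set.mem_setOf_eq]
        exact ⟨by simpa using hv, hvX⟩
      obtain ⟨w, hwU, hnb, col, hcol, huniq⟩ := hc'.2 v hvU
      have hwD : w ∉ D := fun h => hXU w (hDX w h) hwU
      refine ⟨w, hUA hwU, hnb, col.castSucc, by simp [hwD, hcol], ?_⟩
      intro u hu hnbu hcu
      by_cases huD : u ∈ D
      · simp only [huD, if_true] at hcu
        have := (Option.some_inj.1 hcu)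
        exact absurd this.symm (Fin.ne_of_lt (Fin.castSucc_lt_last col))
      · simp only [huD, if_false] at hcu
        obtain ⟨col', hc1, hc2⟩ := Option.map_eq_some_iff.1 hcu
        have hcoleq : col' = col := by
          have := Fin.castSucc_injective _ hc2
          exact this
        subst hcoleq
        have huU : u ∈ (U : Set V) := by
          by_contra huU
          rw [hc'.1 u huU] at hc1
          exact Option.some_ne_none _ hc1.symm
        exact huniq u huU hnbu hc1

lemma not_model_mono {A B : Set V} (h : B ⊆ A) {W : Type} {H : SimpleGraph W}
    (hn : ¬ ModelIn G A H) : ¬ ModelIn G B H := fun hm => hn (hm.mono h)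

open scoped Classical in
lemma master_of_connected (k : ℕ)
    (S : ∀ A : Finset V, ConnOn G ↑A → A.Nonempty →
        (∀ B : Finset V, B ⊆ A → B.card < A.card →
          ¬ ModelIn G ↑B (⊤ : SimpleGraph (Fin (k + 3))) →
          ¬ ModelIn G ↑B (completeMinusTriangle (k + 4)) →
          ∃ c : V → Option (Fin (k + 1)), CFcol G ↑B (k + 1) c) →
        ¬ ModelIn G ↑A (⊤ : SimpleGraph (Fin (k + 3))) →
        ¬ ModelIn G ↑A (completeMinusTriangle (k + 4)) →
        ∃ c : V → Option (Fin (k + 1)), CFcol G ↑A (k + 1) c) :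
    ∀ (n : ℕ) (A : Finset V), A.card ≤ n →
      ¬ ModelIn G ↑A (⊤ : SimpleGraph (Fin (k + 3))) →
      ¬ ModelIn G ↑A (completeMinusTriangle (k + 4)) →
      ∃ c : V → Option (Fin (k + 1)), CFcol G ↑A (k + 1) c := by
  intro n
  induction n with
  | zero =>
    intro A hcard h1 h2
    have hA : A = ∅ := Finset.card_eq_zero.1 (Nat.le_zero.1 hcard)
    subst hA
    exact ⟨fun _ => none, fun v _ => rfl, fun v hv => absurd hv (by simp)⟩
  | succ n ih =>
    intro A hcard h1 h2
    by_cases hne : A.Nonempty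
    · rcases conn_or_split A hne with hconn | ⟨C, hCA, hCne, hCneq, hclosed⟩
      · refine S A hconn hne ?_ h1 h2
        intro B hBA hBcard hB1 hB2
        exact ih B (by omega) hB1 hB2
      · have hCssub : C ⊂ A := Finset.ssubset_iff_subset_ne.2 ⟨hCA, hCneq⟩
        have hCcard : C.card < A.card := Finset.card_lt_card hCssub
        have hDcard : (A \ C).card < A.card := by
          have h1' : (A \ C).card = A.card - C.card := Finset.card_sdiff_of_subset hCA
          have h2' : 0 < C.card := Finset.card_pos.2 hCne
          omega
        obtain ⟨c₁, hc₁⟩ := ih C (by omega)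
          (not_model_mono (by exact_mod_cast Finset.coe_subset.2 hCA) h1)
          (not_model_mono (by exact_mod_cast Finset.coe_subset.2 hCA) h2)
        obtain ⟨c₂, hc₂⟩ := ih (A \ C) (by omega)
          (not_model_mono (by exact_mod_cast Finset.coe_subset.2 (Finset.sdiff_subset)) h1)
          (not_model_mono (by exact_mod_cast Finset.coe_subset.2 (Finset.sdiff_subset)) h2)
        exact ⟨_, glue_split A C hCA (fun v hv u hu hnb => hclosed v hv u hu hnb) hc₁ hc₂⟩
    · have hA : A = ∅ := Finset.not_nonempty_iff_eq_empty.1 hne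
      subst hA
      exact ⟨fun _ => none, fun v _ => rfl, fun v hv => absurd hv (by simp)⟩

lemma cmt_adj {n : ℕ} {i j : Fin n} :
    (completeMinusTriangle n).Adj i j ↔ i ≠ j ∧ ¬(i.val < 3 ∧ j.val < 3) := Iff.rfl

lemma connOn_singleton (x : V) : ConnOn G {x} := by
  rintro a rfl b rfl
  exact walkIn_refl rfl

lemma walkIn_support_from_start {a b : V} (w : G.Walk a b) :
    ∀ x ∈ w.support, WalkIn G {y | y ∈ w.support} a x := by
  induction w with
  | nil =>
    intro x hx
    simp only [Walk.support_nil, List.mem_singleton] at hx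
    subst hx
    exact walkIn_refl (by simp)
  | @cons u c v h p ih =>
    intro x hx
    have hmono : {y | y ∈ p.support} ⊆ {y | y ∈ (Walk.cons h p).support} := by
      intro y hy
      simp only [Set.mem_setOf_eq, Walk.support_cons] at hy ⊢
      exact List.mem_cons_of_mem _ hy
    have hu : u ∈ {y | y ∈ (Walk.cons h p).support} := by simp [Walk.support_cons]
    have hc : c ∈ {y | y ∈ (Walk.cons h p).support} := by
      simp [Walk.support_cons, p.start_mem_support]
    rw [Walk.support_cons] at hx
    rcases List.mem_cons.1 hx with rfl | hx
    · exact walkIn_refl hu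
    · exact (walkIn_of_adj h hu hc).trans ((ih x hx).mono hmono)

lemma connOn_support {a b : V} (w : G.Walk a b) : ConnOn G {y | y ∈ w.support} := by
  intro x hx y hy
  exact (walkIn_support_from_start w x hx).symm.trans (walkIn_support_from_start w y hy)

lemma isolated_singleton {A : Finset V} (hconn : ConnOn G ↑A) {x : V} (hx : x ∈ A)
    (hiso : ∀ u ∈ A, ¬ G.Adj x u) : ∀ b ∈ A, b = x := by
  intro b hb
  obtain ⟨w, hw⟩ := hconn x (by simpa using hx) b (by simpa using hb)
  cases w with
  | nil => rfl
  | @cons _ c _ h p =>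
    exact absurd h (hiso c (by simpa using hw c (by simp [Walk.support_cons, p.start_mem_support]))).elim

lemma no_three_nbrs {A : Finset V} (hA : ¬ ModelIn G ↑A (completeMinusTriangle 4))
    {v a b c : V} (hv : v ∈ (A : Set V)) (ha : a ∈ (A : Set V)) (hb : b ∈ (A : Set V))
    (hc : c ∈ (A : Set V)) (hab : a ≠ b) (hac : a ≠ c) (hbc : b ≠ c)
    (h1 : G.Adj v a) (h2 : G.Adj v b) (h3 : G.Adj v c) : False := by
  apply hA
  refine ⟨fun i => if i.val = 0 then {a} else if i.val = 1 then {b} else if i.val = 2 then {c} else {v},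
    ?_, ?_, ?_, ?_, ?_⟩
  · intro w
    fin_cases w <;> simp_all [Set.singleton_subset_iff]
  · intro w
    fin_cases w <;> simp
  · intro w
    fin_cases w <;> { simp only []; norm_num; exact connOn_singleton _ }
  · intro i j hij
    have hva : v ≠ a := h1.ne
    have hvb : v ≠ b := h2.ne
    have hvc : v ≠ c := h3.ne
    fin_cases i <;> fin_cases j <;> simp_all [Set.disjoint_singleton] <;> tauto
  · intro i j hadj
    obtain ⟨hne, hlt⟩ := cmt_adj.1 hadj
    fin_cases i <;> fin_cases j <;> simp_all <;>
      first
        | exact h1 | exact h1.symm | exact h2 | exact h2.symm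
        | exact h3 | exact h3.symm

lemma k3_model {A : Finset V} {a u : V} {S : Set V} (hS : ConnOn G S)
    (hSA : S ⊆ (A : Set V)) (haA : a ∈ (A : Set V)) (huA : u ∈ (A : Set V))
    (hau : G.Adj a u) (haS : ∃ s ∈ S, G.Adj a s) (huS : ∃ s ∈ S, G.Adj u s)
    (haS' : a ∉ S) (huS' : u ∉ S) :
    ModelIn G ↑A (⊤ : SimpleGraph (Fin 3)) := by
  obtain ⟨sa, hsa, hasa⟩ := haS
  refine ⟨fun i => if i.val = 0 then {a} else if i.val = 1 then {u} else S, ?_, ?_, ?_, ?_, ?_⟩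
  · intro w
    fin_cases w <;> simp_all [Set.singleton_subset_iff]
  · intro w
    fin_cases w <;> simp
    exact ⟨sa, hsa⟩
  · intro w
    fin_cases w <;> simp only [] <;> norm_num <;>
      first | exact connOn_singleton _ | exact hS
  · intro i j hij
    have hau' : a ≠ u := hau.ne
    fin_cases i <;> fin_cases j <;>
      simp_all [Set.disjoint_singleton, Set.disjoint_singleton_left,
        Set.disjoint_singleton_right] <;> tauto
  · intro i j hadj
    have hne : i ≠ j := by
      intro h; rw [h] at hadj; exact (⊤ : SimpleGraph (Fin 3)).loopless.irrefl _ hadj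
    obtain ⟨su, hsu, husu⟩ := huS
    fin_cases i <;> fin_cases j <;>
      first
        | exact absurd rfl hne
        | ((refine ⟨a, ?_, u, ?_, hau⟩ <;> simp) <;> done)
        | ((refine ⟨u, ?_, a, ?_, hau.symm⟩ <;> simp) <;> done)
        | ((refine ⟨a, ?_, sa, ?_, hasa⟩ <;> simp [hsa]) <;> done)
        | ((refine ⟨sa, ?_, a, ?_, hasa.symm⟩ <;> simp [hsa]) <;> done)
        | ((refine ⟨u, ?_, su, ?_, husu⟩ <;> simp [hsu]) <;> done)
        | ((refine ⟨su, ?_, u, ?_, husu.symm⟩ <;> simp [hsu]) <;> done)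

open scoped Classical in
lemma walkIn_avoid {A : Set V} {r x : V} (hrx : ∀ u, u ∈ A → G.Adj r u → u = x) :
    ∀ (n : ℕ) {a b : V} (w : G.Walk a b), w.length ≤ n → (∀ y ∈ w.support, y ∈ A) →
      a ≠ r → b ≠ r → WalkIn G (A \ {r}) a b := by
  intro n
  induction n with
  | zero =>
    intro a b w hlen hsup ha hb
    cases w with
    | nil =>
      refine ⟨Walk.nil, ?_⟩
      intro y hy
      simp only [Walk.support_nil, List.mem_singleton] at hy
      subst hy
      exact ⟨hsup y (by simp), ha⟩
    | cons h p => simp at hlen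
  | succ n ih =>
    intro a b w hlen hsup ha hb
    by_cases hr : r ∈ w.support
    · have hsplit := w.take_spec hr
      have hTsub : (w.takeUntil r hr).support ⊆ w.support := Walk.support_takeUntil_subset w hr
      have hDsub : (w.dropUntil r hr).support ⊆ w.support := Walk.support_dropUntil_subset w hr
      generalize hT : w.takeUntil r hr = t at hsplit hTsub
      generalize hD : w.dropUntil r hr = d at hsplit hDsub
      have hlen_add : t.length + d.length = w.length := by
        rw [← hsplit]; simp [Walk.length_append]
      cases d with
      | nil => exact absurd rfl hb
      | @cons _ z _ hrz d' =>
        have hzA : z ∈ A := hsup z (hDsub (by simp [Walk.support_cons, d'.start_mem_support]))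
        have hzx : z = x := hrx z hzA hrz
        have hRsub : t.reverse.support ⊆ w.support := by
          rw [Walk.support_reverse]
          intro y hy
          exact hTsub (List.mem_reverse.1 hy)
        have hRlen : t.reverse.length = t.length := Walk.length_reverse t
        generalize hR : t.reverse = tr at hRsub hRlen
        cases tr with
        | nil =>
          exfalso
          have h0 : t.length = 0 := by simpa using hRlen.symm
          have := Walk.eq_of_length_eq_zero h0
          exact ha this
        | @cons _ z₂ _ hrz₂ t₂ =>
          have hz₂A : z₂ ∈ A := hsup z₂ (hRsub (by simp [Walk.support_cons, t₂.start_mem_support]))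
          have hz₂x : z₂ = x := hrx z₂ hz₂A hrz₂
          subst hzx
          subst hz₂x
          have ht₂sub : ∀ y ∈ t₂.support, y ∈ w.support := by
            intro y hy
            exact hRsub (by simp [Walk.support_cons, hy])
          have hw'len : (t₂.reverse.append d').length ≤ n := by
            have h1 : t₂.length + 1 = t.length := by simpa using hRlen
            have h3 : (t₂.reverse.append d').length = t₂.length + d'.length := by
              simp [Walk.length_append, Walk.length_reverse]
            simp only [Walk.length_cons] at hlen_add
            omega
          refine ih (t₂.reverse.append d') hw'len ?_ ha hb
          intro y hy
          rw [Walk.support_append] at hy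
          rcases List.mem_append.1 hy with hy | hy
          · rw [Walk.support_reverse] at hy
            exact hsup y (ht₂sub y (List.mem_reverse.1 hy))
          · have : y ∈ (Walk.cons hrz d').support := by
              simp only [Walk.support_cons]
              exact List.mem_cons_of_mem _ (List.mem_of_mem_tail hy)
            exact hsup y (hDsub this)
    · refine ⟨w, ?_⟩
      intro y hy
      exact ⟨hsup y hy, fun h => hr (h ▸ hy)⟩

open scoped Classical in
lemma connOn_erase {A : Finset V} (hconn : ConnOn G ↑A) {r x : V}
    (hrx : ∀ u, u ∈ A → G.Adj r u → u = x) : ConnOn G ↑(A.erase r) := by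
  intro a haA b hbA
  have ha' : a ∈ (A : Set V) ∧ a ≠ r := by
    simp only [Finset.coe_erase, Set.mem_diff, Set.mem_singleton_iff] at haA
    exact ⟨haA.1, haA.2⟩
  have hb' : b ∈ (A : Set V) ∧ b ≠ r := by
    simp only [Finset.coe_erase, Set.mem_diff, Set.mem_singleton_iff] at hbA
    exact ⟨hbA.1, hbA.2⟩
  obtain ⟨w, hw⟩ := hconn a ha'.1 b hb'.1
  have := walkIn_avoid (G := G) (A := (A : Set V)) (r := r) (x := x)
    (fun u hu hadj => hrx u (by simpa using hu) hadj) w.length w le_rfl hw ha'.2 hb'.2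
  refine this.mono ?_
  intro y hy
  simp only [Finset.coe_erase, Set.mem_diff, Set.mem_singleton_iff]
  exact ⟨hy.1, hy.2⟩

/-- a perfect code on `A`: every vertex of `A` sees exactly one element of `D`
in its closed neighborhood. -/
def CodeOn (G : SimpleGraph V) (A : Set V) (D : Finset V) : Prop :=
  ↑D ⊆ A ∧ ∀ v ∈ A, ∃ d ∈ D, NbA G v d ∧ ∀ d' ∈ D, NbA G v d' → d' = d

open scoped Classical in
lemma CodeOn.toColoring {A : Set V} {D : Finset V} (h : CodeOn G A D) :
    ∃ c : V → Option (Fin 1), CFcol G A 1 c := by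
  refine ⟨fun v => if v ∈ D then some 0 else none, ?_, ?_⟩
  · intro v hv
    have : v ∉ D := fun hvD => hv (h.1 (by simpa using hvD))
    simp [this]
  · intro v hv
    obtain ⟨d, hd, hnb, huniq⟩ := h.2 v hv
    refine ⟨d, h.1 (by simpa using hd), hnb, 0, by simp [hd], ?_⟩
    intro u hu hnbu hcu
    have huD : u ∈ D := by
      by_contra huD
      simp [huD] at hcu
    exact huniq u huD hnbu

open scoped Classical in
lemma exists_leaf {A : Finset V} (hconn : ConnOn G ↑A) (hcard : 2 ≤ A.card)
    (h1 : ¬ ModelIn G ↑A (⊤ : SimpleGraph (Fin 3))) :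
    ∃ r ∈ A, ∃ x ∈ A, G.Adj r x ∧ ∀ u ∈ A, G.Adj r u → u = x := by
  have hne : A.Nonempty := Finset.card_pos.1 (by omega)
  obtain ⟨a₀, ha₀⟩ := hne
  set P : ℕ → Prop := fun n => ∃ (a b : V) (w : G.Walk a b), w.IsPath ∧
    (∀ y ∈ w.support, y ∈ (A : Set V)) ∧ w.length = n with hP
  have hP0 : P 0 := ⟨a₀, a₀, Walk.nil, Walk.IsPath.nil, by simpa using ha₀, rfl⟩
  have hPbound : ∀ n, P n → n + 1 ≤ A.card := by
    intro n ⟨a, b, w, hpath, hsup, hlen⟩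
    have hnodup : w.support.Nodup := hpath.support_nodup
    have hsub : w.support.toFinset ⊆ A := by
      intro y hy
      have := hsup y (List.mem_toFinset.1 hy)
      simpa using this
    have hcard' : w.support.toFinset.card = n + 1 := by
      rw [List.toFinset_card_of_nodup hnodup, Walk.length_support, hlen]
    calc n + 1 = w.support.toFinset.card := hcard'.symm
    _ ≤ A.card := Finset.card_le_card hsub
  set N := Nat.findGreatest P A.card with hN
  have hPN : P N := Nat.findGreatest_spec (P := P) (Nat.zero_le _) hP0
  have hNmax : ∀ m, P m → m ≤ N := by
    intro m hm
    by_contra hmN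
    push_neg at hmN
    exact Nat.findGreatest_is_greatest hmN (by have := hPbound m hm; omega) hm
  obtain ⟨a, b, w, hpath, hsup, hlen⟩ := hPN
  have haA : a ∈ (A : Set V) := hsup a w.start_mem_support
  -- every A-neighbor of a is on the path
  have hnbsup : ∀ u ∈ A, G.Adj a u → u ∈ w.support := by
    intro u hu hadj
    by_contra husup
    have hpath' : (Walk.cons hadj.symm w).IsPath :=
      (Walk.cons_isPath_iff _ _).2 ⟨hpath, husup⟩
    have : P (N + 1) := by
      refine ⟨u, b, Walk.cons hadj.symm w, hpath', ?_, by simp [hlen]⟩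
      intro y hy
      rw [Walk.support_cons] at hy
      rcases List.mem_cons.1 hy with rfl | hy
      · simpa using hu
      · exact hsup y hy
    have := hNmax _ this
    omega
  -- a has a neighbor in A
  obtain ⟨x₁, hx₁A, hax₁⟩ : ∃ u ∈ A, G.Adj a u := by
    by_contra hiso
    push_neg at hiso
    have hsing := isolated_singleton hconn (by simpa using haA) hiso
    have : A ⊆ {a} := fun y hy => by simp [hsing y hy]
    have := Finset.card_le_card this
    simp at this
    omega
  by_cases huniq : ∀ u ∈ A, G.Adj a u → u = x₁
  · exact ⟨a, by simpa using haA, x₁, hx₁A, hax₁, huniq⟩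
  push_neg at huniq
  obtain ⟨x₂, hx₂A, hax₂, hx₂x₁⟩ := huniq
  exfalso
  -- a has two distinct neighbors, both on the maximal path: find a K₃ minor
  cases w with
  | nil =>
    have hx := hnbsup x₁ hx₁A hax₁
    simp only [Walk.support_nil, List.mem_singleton] at hx
    subst hx
    exact G.loopless.irrefl _ hax₁
  | @cons _ c _ h₀ w₀ =>
    -- pick the neighbor different from c
    obtain ⟨u, huA, hau, huc⟩ : ∃ u, u ∈ A ∧ G.Adj a u ∧ u ≠ c := by
      by_cases hx₁c : x₁ = c
      · exact ⟨x₂, hx₂A, hax₂, by rw [← hx₁c]; exact fun h => hx₂x₁ h⟩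
      · exact ⟨x₁, hx₁A, hax₁, hx₁c⟩
    have husup : u ∈ w₀.support := by
      have := hnbsup u huA hau
      rw [Walk.support_cons] at this
      rcases List.mem_cons.1 this with rfl | h
      · exact absurd rfl hau.ne
      · exact h
    have hw₀path : w₀.IsPath := hpath.of_cons
    have haw₀ : a ∉ w₀.support := ((Walk.cons_isPath_iff _ _).1 hpath).2
    set q := w₀.takeUntil u husup with hq
    have hqpath : q.IsPath := hw₀path.takeUntil husup
    have hqsub : q.support ⊆ w₀.support := Walk.support_takeUntil_subset w₀ husup
    have hqrevlen : q.reverse.length = q.length := Walk.length_reverse q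
    have hqrevpath : q.reverse.IsPath := hqpath.reverse
    have hqrevsup : q.reverse.support = q.support.reverse := Walk.support_reverse q
    cases hqr : q.reverse with
    | nil =>
      have h0 : q.length = 0 := by
        have := congrArg Walk.length hqr
        simpa [Walk.length_reverse] using this
      exact huc (Walk.eq_of_length_eq_zero h0).symm
    | @cons _ e _ h₃ s =>
      have hssub : ∀ y ∈ s.support, y ∈ q.support := by
        intro y hy
        have : y ∈ q.reverse.support := by rw [hqr]; simp [Walk.support_cons, hy]
        rw [hqrevsup] at this
        exact List.mem_reverse.1 this
      have husq : u ∉ s.support := by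
        have : q.reverse.support.Nodup := hqrevpath.support_nodup
        rw [hqr] at this
        simp only [Walk.support_cons, List.nodup_cons] at this
        exact this.1
      refine h1 (k3_model (connOn_support s) ?_ haA (by simpa using huA) hau ?_ ?_ ?_ ?_)
      · intro y hy
        exact hsup y (by
          rw [Walk.support_cons]
          exact List.mem_cons_of_mem _ (hqsub (hssub y hy)))
      · refine ⟨c, ?_, h₀⟩
        have : c ∈ s.support := by
          have hcq : c ∈ q.reverse.support := by
            rw [hqrevsup]
            exact List.mem_reverse.2 q.start_mem_support
          rw [hqr] at hcq
          simp only [Walk.support_cons] at hcq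
          rcases List.mem_cons.1 hcq with rfl | hcq
          · exact absurd rfl (Ne.symm huc)
          · exact hcq
        exact this
      · exact ⟨e, s.start_mem_support, h₃⟩
      · intro ha
        exact haw₀ (hqsub (hssub a ha))
      · exact husq

open scoped Classical in
lemma code_insert {A B DB : Finset V} {p : V} (hcode : CodeOn G ↑B DB)
    (hpA : p ∈ A) (hBA : B ⊆ A)
    (hfar : ∀ v ∈ B, ¬ NbA G v p)
    (hcov : ∀ v ∈ A, v ∉ B →
      (NbA G v p ∧ ∀ d' ∈ DB, ¬ NbA G v d') ∨
      (¬ NbA G v p ∧ ∃ d ∈ DB, NbA G v d ∧ ∀ d' ∈ DB, NbA G v d' → d' = d)) :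
    CodeOn G ↑A (insert p DB) := by
  obtain ⟨hDBB, hcode2⟩ := hcode
  constructor
  · intro d hd
    simp only [Finset.coe_insert, Set.mem_insert_iff, Finset.mem_coe] at hd
    rcases hd with rfl | hd
    · simpa using hpA
    · exact Finset.mem_coe.2 (hBA (by simpa using hDBB (by simpa using hd)))
  · intro v hv
    have hvA : v ∈ A := by simpa using hv
    by_cases hvB : v ∈ B
    · obtain ⟨d, hd, hnb, huniq⟩ := hcode2 v (by simpa using hvB)
      refine ⟨d, Finset.mem_insert_of_mem hd, hnb, ?_⟩
      intro d' hd' hnb'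
      rcases Finset.mem_insert.1 hd' with rfl | hd'
      · exact absurd hnb' (hfar v hvB)
      · exact huniq d' hd' hnb'
    · rcases hcov v hvA hvB with ⟨hnbp, hnone⟩ | ⟨hnotp, d, hd, hnb, huniq⟩
      · refine ⟨p, Finset.mem_insert_self _ _, hnbp, ?_⟩
        intro d' hd' hnb'
        rcases Finset.mem_insert.1 hd' with rfl | hd'
        · rfl
        · exact absurd hnb' (hnone d' hd')
      · refine ⟨d, Finset.mem_insert_of_mem hd, hnb, ?_⟩
        intro d' hd' hnb'
        rcases Finset.mem_insert.1 hd' with rfl | hd'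
        · exact absurd hnb' hnotp
        · exact huniq d' hd' hnb'

open scoped Classical in
lemma singleton_code {A : Finset V} {x : V} (hxA : x ∈ A)
    (hall : ∀ v ∈ A, NbA G v x) : CodeOn G ↑A {x} := by
  constructor
  · intro d hd
    simp only [Finset.coe_singleton, Set.mem_singleton_iff] at hd
    subst hd
    simpa using hxA
  · intro v hv
    refine ⟨x, by simp, hall v (by simpa using hv), ?_⟩
    intro d' hd' _
    simpa using hd'

open scoped Classical in
lemma base_connected :
    ∀ (n : ℕ) (A : Finset V), A.card ≤ n → ConnOn G ↑A → A.Nonempty →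
      ¬ ModelIn G ↑A (⊤ : SimpleGraph (Fin 3)) →
      ¬ ModelIn G ↑A (completeMinusTriangle 4) →
      ∃ D : Finset V, CodeOn G ↑A D := by
  intro n
  induction n with
  | zero =>
    intro A hcard hconn hne h1 h2
    obtain ⟨a, ha⟩ := hne
    have := Finset.card_pos.2 ⟨a, ha⟩
    omega
  | succ n ih =>
    intro A hcard hconn hne h1 h2
    by_cases hA1 : A.card ≤ 1
    · have hA1' : A.card = 1 := le_antisymm hA1 (Finset.card_pos.2 hne)
      obtain ⟨a, rfl⟩ := Finset.card_eq_one.1 hA1'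
      refine ⟨{a}, singleton_code (by simp) ?_⟩
      intro v hv
      simp only [Finset.mem_singleton] at hv
      subst hv
      exact nbA_refl G v
    · have hcard2 : 2 ≤ A.card := by omega
      obtain ⟨r, hrA, x, hxA, hrxadj, hrx⟩ := exists_leaf hconn hcard2 h1
      have hxr : x ≠ r := hrxadj.ne'
      set A₂ := A.erase r with hA₂
      have hconn₂ : ConnOn G ↑A₂ := connOn_erase hconn hrx
      have hxA₂ : x ∈ A₂ := Finset.mem_erase.2 ⟨hxr, hxA⟩
      by_cases hxnb : ∃ y, y ∈ A ∧ G.Adj x y ∧ y ≠ r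
      · obtain ⟨y, hyA, hxy, hyr⟩ := hxnb
        have hyx : y ≠ x := hxy.ne'
        have hxdeg : ∀ u ∈ A, G.Adj x u → u = r ∨ u = y := by
          intro u hu hadj
          by_contra hc
          push_neg at hc
          exact no_three_nbrs h2 (by simpa using hxA) (by simpa using hrA)
            (by simpa using hyA) (by simpa using hu)
            (Ne.symm hyr) (Ne.symm hc.1) (Ne.symm hc.2)
            hrxadj.symm hxy hadj
        set A₃ := A₂.erase x with hA₃
        have hmem₃ : ∀ v, v ∈ A₃ ↔ v ∈ A ∧ v ≠ r ∧ v ≠ x := by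
          intro v
          simp only [hA₃, hA₂, Finset.mem_erase]
          tauto
        have hA₃A : A₃ ⊆ A := fun v hv => ((hmem₃ v).1 hv).1
        have hconn₃ : ConnOn G ↑A₃ := by
          refine connOn_erase hconn₂ (x := y) ?_
          intro u hu hadj
          have hu' := Finset.mem_erase.1 hu
          rcases hxdeg u hu'.2 hadj with rfl | rfl
          · exact absurd rfl hu'.1
          · rfl
        have hyA₃ : y ∈ A₃ := (hmem₃ y).2 ⟨hyA, hyr, hyx⟩
        have hA₃card : A₃.card ≤ n := by
          have e2 : A₂.card = A.card - 1 := Finset.card_erase_of_mem hrA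
          have e3 : A₃.card = A₂.card - 1 := Finset.card_erase_of_mem hxA₂
          have : 0 < A₂.card := Finset.card_pos.2 ⟨x, hxA₂⟩
          omega
        have hsub₃ : (↑A₃ : Set V) ⊆ ↑A := by
          intro v hv
          exact Finset.mem_coe.2 (hA₃A (by simpa using hv))
        obtain ⟨D₂, hD₂⟩ := ih A₃ hA₃card hconn₃ ⟨y, hyA₃⟩
          (not_model_mono hsub₃ h1) (not_model_mono hsub₃ h2)
        have hD₂sub : ∀ d ∈ D₂, d ∈ A₃ := by
          intro d hd
          have := hD₂.1 (by simpa using hd : d ∈ (↑D₂ : Set V))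
          simpa using this
        have hfar_r : ∀ v ∈ A₃, ¬ NbA G v r := by
          intro v hv hnb
          have hv' := (hmem₃ v).1 hv
          rcases hnb with h | h
          · exact hv'.2.1 h.symm
          · exact hv'.2.2 (hrx v hv'.1 h.symm)
        have hnb_x_r : NbA G x r := Or.inr hrxadj.symm
        have hno_r : ∀ d' ∈ D₂, ¬ NbA G r d' := by
          intro d' hd' hnb
          have hd'3 := (hmem₃ d').1 (hD₂sub d' hd')
          rcases hnb with h | h
          · exact hd'3.2.1 h
          · exact hd'3.2.2 (hrx d' hd'3.1 h)
        obtain ⟨d, hdD, hnbyd, huniqy⟩ := hD₂.2 y (by simpa using hyA₃)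
        by_cases hdy : d = y
        · -- y itself is in the code of A₃
          have hyD : y ∈ D₂ := hdy ▸ hdD
          by_cases hznb : ∃ z, z ∈ A ∧ G.Adj y z ∧ z ≠ x
          · obtain ⟨z, hzA, hyz, hzx⟩ := hznb
            have hzy : z ≠ y := hyz.ne'
            have hzr : z ≠ r := by
              intro h
              subst h
              exact hyx (hrx y hyA hyz.symm)
            have hydeg : ∀ u ∈ A, G.Adj y u → u = x ∨ u = z := by
              intro u hu hadj
              by_contra hc
              push_neg at hc
              exact no_three_nbrs h2 (by simpa using hyA) (by simpa using hxA)
                (by simpa using hzA) (by simpa using hu)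
                (Ne.symm hzx) (Ne.symm hc.1) (Ne.symm hc.2)
                hxy.symm hyz hadj
            set A₄ := A₃.erase y with hA₄
            have hmem₄ : ∀ v, v ∈ A₄ ↔ v ∈ A ∧ v ≠ r ∧ v ≠ x ∧ v ≠ y := by
              intro v
              simp only [hA₄, Finset.mem_erase, hmem₃]
              tauto
            have hA₄A : A₄ ⊆ A := fun v hv => ((hmem₄ v).1 hv).1
            have hconn₄ : ConnOn G ↑A₄ := by
              refine connOn_erase hconn₃ (x := z) ?_
              intro u hu hadj
              have hu' := (hmem₃ u).1 hu
              rcases hydeg u hu'.1 hadj with rfl | rfl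
              · exact absurd rfl hu'.2.2
              · rfl
            have hzA₄ : z ∈ A₄ := (hmem₄ z).2 ⟨hzA, hzr, hzx, hzy⟩
            have hA₄card : A₄.card ≤ n := by
              have e4 : A₄.card = A₃.card - 1 := Finset.card_erase_of_mem hyA₃
              omega
            have hsub₄ : (↑A₄ : Set V) ⊆ ↑A := by
              intro v hv
              exact Finset.mem_coe.2 (hA₄A (by simpa using hv))
            obtain ⟨D₃, hD₃⟩ := ih A₄ hA₄card hconn₄ ⟨z, hzA₄⟩
              (not_model_mono hsub₄ h1) (not_model_mono hsub₄ h2)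
            have hD₃sub : ∀ d ∈ D₃, d ∈ A₄ := by
              intro d₀ hd₀
              have := hD₃.1 (by simpa using hd₀ : d₀ ∈ (↑D₃ : Set V))
              simpa using this
            have hfar₄r : ∀ v ∈ A₄, ¬ NbA G v r := by
              intro v hv
              exact hfar_r v (Finset.mem_of_mem_erase hv)
            have hno_r₄ : ∀ d' ∈ D₃, ¬ NbA G r d' := by
              intro d' hd' hnb
              have hd'4 := (hmem₄ d').1 (hD₃sub d' hd')
              rcases hnb with h | h
              · exact hd'4.2.1 h
              · exact hd'4.2.2.1 (hrx d' hd'4.1 h)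
            have hno_x₄ : ∀ d' ∈ D₃, ¬ NbA G x d' := by
              intro d' hd' hnb
              have hd'4 := (hmem₄ d').1 (hD₃sub d' hd')
              rcases hnb with h | h
              · exact hd'4.2.2.1 h
              · rcases hxdeg d' hd'4.1 h with rfl | rfl
                · exact hd'4.2.1 rfl
                · exact hd'4.2.2.2 rfl
            obtain ⟨d₃, hd₃D, hnbz, huniqz⟩ := hD₃.2 z (by simpa using hzA₄)
            by_cases hd₃z : d₃ = z
            · have hzD : z ∈ D₃ := hd₃z ▸ hd₃D
              refine ⟨insert r D₃, code_insert hD₃ hrA hA₄A hfar₄r ?_⟩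
              intro v hvA hvA₄
              have hv3 : v = r ∨ v = x ∨ v = y := by
                by_contra hc
                push_neg at hc
                exact hvA₄ ((hmem₄ v).2 ⟨hvA, hc.1, hc.2.1, hc.2.2⟩)
              rcases hv3 with rfl | rfl | rfl
              · exact Or.inl ⟨nbA_refl G v, hno_r₄⟩
              · exact Or.inl ⟨hnb_x_r, hno_x₄⟩
              · refine Or.inr ⟨?_, z, hzD, Or.inr hyz, ?_⟩
                · intro hnb
                  rcases hnb with h | h
                  · exact hyr h.symm
                  · exact hyx (hrx v hyA h.symm)
                · intro d' hd' hnb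
                  have hd'4 := (hmem₄ d').1 (hD₃sub d' hd')
                  rcases hnb with h | h
                  · exact absurd h hd'4.2.2.2
                  · rcases hydeg d' hd'4.1 h with rfl | rfl
                    · exact absurd rfl hd'4.2.2.1
                    · rfl
            · have hzD₃ : z ∉ D₃ := fun hz => hd₃z (huniqz z hz (nbA_refl G z)).symm
              have hfar₄x : ∀ v ∈ A₄, ¬ NbA G v x := by
                intro v hv hnb
                have hv4 := (hmem₄ v).1 hv
                rcases hnb with h | h
                · exact hv4.2.2.1 h.symm
                · rcases hxdeg v hv4.1 h.symm with rfl | rfl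
                  · exact hv4.2.1 rfl
                  · exact hv4.2.2.2 rfl
              refine ⟨insert x D₃, code_insert hD₃ hxA hA₄A hfar₄x ?_⟩
              intro v hvA hvA₄
              have hv3 : v = r ∨ v = x ∨ v = y := by
                by_contra hc
                push_neg at hc
                exact hvA₄ ((hmem₄ v).2 ⟨hvA, hc.1, hc.2.1, hc.2.2⟩)
              rcases hv3 with rfl | rfl | rfl
              · exact Or.inl ⟨Or.inr hrxadj, hno_r₄⟩
              · exact Or.inl ⟨nbA_refl G v, hno_x₄⟩
              · refine Or.inl ⟨Or.inr hxy.symm, ?_⟩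
                intro d' hd' hnb
                have hd'4 := (hmem₄ d').1 (hD₃sub d' hd')
                rcases hnb with h | h
                · exact hd'4.2.2.2 h
                · rcases hydeg d' hd'4.1 h with rfl | rfl
                  · exact hd'4.2.2.1 rfl
                  · exact hzD₃ hd'
          · -- y has no neighbor besides x : A = {r, x, y}
            have hiso : ∀ u ∈ A₃, ¬ G.Adj y u := by
              intro u hu hadj
              have hu' := (hmem₃ u).1 hu
              push_neg at hznb
              exact hu'.2.2 (hznb u hu'.1 hadj)
            have hsing := isolated_singleton hconn₃ hyA₃ hiso
            refine ⟨{x}, singleton_code hxA ?_⟩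
            intro v hv
            by_cases hvr : v = r
            · subst hvr; exact Or.inr hrxadj
            by_cases hvx : v = x
            · subst hvx; exact nbA_refl G v
            have hvmem : v ∈ A₃ := (hmem₃ v).2 ⟨hv, hvr, hvx⟩
            have := hsing v hvmem
            subst this
            exact Or.inr hxy.symm
        · -- y is dominated by some other code vertex : take D₂ ∪ {r}
          have hyD₂ : y ∉ D₂ := by
            intro hyD
            exact hdy (huniqy y hyD (nbA_refl G y)).symm
          have hno_x : ∀ d' ∈ D₂, ¬ NbA G x d' := by
            intro d' hd' hnb
            have hd'3 := (hmem₃ d').1 (hD₂sub d' hd')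
            rcases hnb with h | h
            · exact hd'3.2.2 h
            · rcases hxdeg d' hd'3.1 h with rfl | rfl
              · exact hd'3.2.1 rfl
              · exact hyD₂ hd'
          refine ⟨insert r D₂, code_insert hD₂ hrA hA₃A hfar_r ?_⟩
          intro v hvA hvA₃
          have hv3 : v = r ∨ v = x := by
            by_contra hc
            push_neg at hc
            exact hvA₃ ((hmem₃ v).2 ⟨hvA, hc.1, hc.2⟩)
          rcases hv3 with rfl | rfl
          · exact Or.inl ⟨nbA_refl G v, hno_r⟩
          · exact Or.inl ⟨hnb_x_r, hno_x⟩
      · -- x has no neighbor besides r : A = {r, x}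
        push_neg at hxnb
        have hiso : ∀ u ∈ A₂, ¬ G.Adj x u := by
          intro u hu hadj
          have hu' := Finset.mem_erase.1 hu
          exact hu'.1 (hxnb u hu'.2 hadj)
        have hsing := isolated_singleton hconn₂ hxA₂ hiso
        refine ⟨{x}, singleton_code hxA ?_⟩
        intro v hv
        by_cases hvr : v = r
        · subst hvr; exact Or.inr hrxadj
        have hvmem : v ∈ A₂ := Finset.mem_erase.2 ⟨hvr, hv⟩
        have := hsing v hvmem
        subst this
        exact nbA_refl G v

open scoped Classical in
lemma master : ∀ (m : ℕ) (A : Finset V),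
    ¬ ModelIn G ↑A (⊤ : SimpleGraph (Fin (m + 3))) →
    ¬ ModelIn G ↑A (completeMinusTriangle (m + 4)) →
    ∃ c : V → Option (Fin (m + 1)), CFcol G ↑A (m + 1) c := by
  intro m
  induction m with
  | zero =>
    intro A h1 h2
    refine master_of_connected 0 ?_ A.card A le_rfl h1 h2
    intro B hconn hne _ hB1 hB2
    obtain ⟨D, hD⟩ := base_connected B.card B le_rfl hconn hne hB1 hB2
    exact hD.toColoring
  | succ m ihm =>
    intro A h1 h2
    refine master_of_connected (m + 1) ?_ A.card A le_rfl h1 h2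
    intro B hconn hne _ hB1 hB2
    exact step_connected m (fun B' hB1' hB2' => ihm B' hB1' hB2') B hconn hne hB1 hB2

end CFAux

/-- for `k ≥ 1`, a graph with neither a `K_{k+2}` minor nor a
`K_{k+3}^{-3}` minor admits a closed-neighborhood conflict-free `k`-coloring. -/
theorem cf_colorable_of_excluded_minors {V : Type*} [Fintype V] (G : SimpleGraph V)
    (k : ℕ) (hk : 1 ≤ k)
    (h1 : ¬ HasMinor G (⊤ : SimpleGraph (Fin (k + 2))))
    (h2 : ¬ HasMinor G (completeMinusTriangle (k + 3))) :
    ∃ c : V → Option (Fin k), IsCFColoring G k c := by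
  classical
  obtain ⟨m, rfl⟩ : ∃ m, k = m + 1 := ⟨k - 1, by omega⟩
  have h1' : ¬ CFAux.ModelIn G ↑(Finset.univ : Finset V) (⊤ : SimpleGraph (Fin (m + 3))) := by
    intro h
    refine h1 (CFAux.ModelIn.hasMinor ?_)
    simpa using h
  have h2' : ¬ CFAux.ModelIn G ↑(Finset.univ : Finset V) (completeMinusTriangle (m + 4)) := by
    intro h
    refine h2 (CFAux.ModelIn.hasMinor ?_)
    simpa using h
  obtain ⟨c, hc⟩ := CFAux.master m Finset.univ h1' h2'
  refine ⟨c, ?_⟩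
  intro v
  obtain ⟨w, hwA, hnb, col, hcol, huniq⟩ := hc.2 v (by simp)
  refine ⟨w, ?_, col, hcol, ?_⟩
  · rcases hnb with rfl | hadj
    · exact Set.mem_insert _ _
    · exact Set.mem_insert_of_mem _ hadj
  · intro u hu hcu
    refine huniq u (by simp) ?_ hcu
    rcases Set.mem_insert_iff.1 hu with rfl | hadj
    · exact Or.inl rfl
    · exact Or.inr hadj
end

section
/- (Conflict-free Hadwiger) Every graph that does not contain K_{k+1} as a minor admits a closed-neighborhood conflict-free k-coloring; i.e., χ_CF(G) ≤ k whenever G is K_{k+1}-minor-free. -/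
open SimpleGraph

namespace CFH

variable {V : Type*} (G : SimpleGraph V)

/-- `v` is at distance ≤ 1 from `S`. -/
def Near1 (S : Finset V) (v : V) : Prop := ∃ s ∈ S, v = s ∨ G.Adj v s

/-- `v` is at distance ≤ 2 from `S`. -/
def Near2 (S : Finset V) (v : V) : Prop :=
  ∃ s ∈ S, v = s ∨ G.Adj v s ∨ ∃ x, G.Adj v x ∧ G.Adj x s

/-- Members of `S` are pairwise at distance ≥ 3. -/
def Sep3 (S : Finset V) : Prop :=
  ∀ s ∈ S, ∀ t ∈ S, s ≠ t → ¬ G.Adj s t ∧ ∀ x, ¬ (G.Adj s x ∧ G.Adj x t)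

/-- The closed neighborhood of `S`. -/
def N1set (S : Finset V) : Set V := {v | Near1 G S v}

/-- Connectivity invariant: within each connected component of `G`, the closed
neighborhood of `S` induces a connected graph. -/
def ConnInv (S : Finset V) : Prop :=
  ∀ x y (hx : x ∈ N1set G S) (hy : y ∈ N1set G S), G.Reachable x y →
    (G.induce (N1set G S)).Reachable ⟨x, hx⟩ ⟨y, hy⟩

variable {G}

lemma reach_mono {A B : Set V} (h : A ⊆ B) {a b : ↥A}
    (hr : (G.induce A).Reachable a b) :
    (G.induce B).Reachable ⟨a.1, h a.2⟩ ⟨b.1, h b.2⟩ := by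
  exact hr.map (⟨fun x => ⟨x.1, h x.2⟩, fun {x y} hxy => hxy⟩ : G.induce A →g G.induce B)

lemma reach_val {A : Set V} {a b : ↥A} (hr : (G.induce A).Reachable a b) :
    G.Reachable a.1 b.1 := by
  exact hr.map (⟨Subtype.val, fun {x y} hxy => hxy⟩ : G.induce A →g G)

/-- Double-induce iso. -/
noncomputable def induceInduceIso (G : SimpleGraph V) (A : Set V) (s : Set ↥A) :
    (G.induce A).induce s ≃g G.induce (Subtype.val '' s) where
  toEquiv := Equiv.Set.image Subtype.val s Subtype.val_injective
  map_rel_iff' := Iff.rfl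

lemma connected_image {A : Set V} {s : Set ↥A} (h : ((G.induce A).induce s).Connected) :
    (G.induce (Subtype.val '' s)).Connected :=
  h.map (induceInduceIso G A s).toHom (induceInduceIso G A s).toEquiv.surjective

/-- The connected component of a vertex induces a connected graph. -/
lemma comp_connected {W : Type*} (H : SimpleGraph W) (y0 : W) :
    (H.induce {y | H.Reachable y0 y}).Connected := by
  have key : ∀ {a b : W} (p : H.Walk a b) (ha : H.Reachable y0 a) (hb : H.Reachable y0 b),
      (H.induce {y | H.Reachable y0 y}).Reachable ⟨a, ha⟩ ⟨b, hb⟩ := by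
    intro a b p
    induction p with
    | nil => intro ha hb; rfl
    | @cons a c b h q ih =>
      intro ha hb
      have hc : H.Reachable y0 c := ha.trans h.reachable
      have step : (H.induce {y | H.Reachable y0 y}).Adj ⟨a, ha⟩ ⟨c, hc⟩ := h
      exact step.reachable.trans (ih hc hb)
  rw [connected_iff]
  refine ⟨?_, ⟨⟨y0, Reachable.refl _⟩⟩⟩
  rintro ⟨a, ha⟩ ⟨b, hb⟩
  obtain ⟨p⟩ := id ha
  obtain ⟨q⟩ := id hb
  exact ((key p (Reachable.refl _) ha).symm).trans (key q (Reachable.refl _) hb)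

variable [DecidableEq V]

lemma sep3_insert {S : Finset V} (h1 : Sep3 G S) {u : V} (hu : ¬ Near2 G S u) :
    Sep3 G (insert u S) := by
  intro s hs t ht hne
  rcases Finset.mem_insert.mp hs with rfl | hsS
  · rcases Finset.mem_insert.mp ht with rfl | htS
    · exact absurd rfl hne
    · exact ⟨fun h => hu ⟨t, htS, Or.inr (Or.inl h)⟩,
        fun x ⟨hx1, hx2⟩ => hu ⟨t, htS, Or.inr (Or.inr ⟨x, hx1, hx2⟩)⟩⟩
  · rcases Finset.mem_insert.mp ht with rfl | htS
    · exact ⟨fun h => hu ⟨s, hsS, Or.inr (Or.inl h.symm)⟩,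
        fun x ⟨hx1, hx2⟩ => hu ⟨s, hsS, Or.inr (Or.inr ⟨x, hx2.symm, hx1.symm⟩)⟩⟩
    · exact h1 s hsS t htS hne

lemma mem_n1_insert {S : Finset V} {u z : V} :
    z ∈ N1set G (insert u S) ↔ (z = u ∨ G.Adj z u) ∨ z ∈ N1set G S := by
  constructor
  · rintro ⟨s, hs, hz⟩
    rcases Finset.mem_insert.mp hs with rfl | hs
    · exact Or.inl hz
    · exact Or.inr ⟨s, hs, hz⟩
  · rintro (hz | ⟨s, hs, hz⟩)
    · exact ⟨u, Finset.mem_insert_self u S, hz⟩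
    · exact ⟨s, Finset.mem_insert_of_mem hs, hz⟩

lemma n1_subset_insert {S : Finset V} {u : V} : N1set G S ⊆ N1set G (insert u S) :=
  fun _ hz => mem_n1_insert.mpr (Or.inr hz)

/-- Connectivity invariant is preserved when inserting a vertex `u` whose ball attaches
to `N1set S` via `u — u' — x` with `x ∈ N1set S`. -/
lemma connInv_insert_attach {S : Finset V} (h2 : ConnInv G S) {u u' x : V}
    (huu' : G.Adj u u') (hu'x : G.Adj u' x) (hx : x ∈ N1set G S) :
    ConnInv G (insert u S) := by
  set B := N1set G (insert u S) with hB
  have humem : u ∈ B := mem_n1_insert.mpr (Or.inl (Or.inl rfl))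
  have hu'mem : u' ∈ B := mem_n1_insert.mpr (Or.inl (Or.inr huu'.symm))
  have hxB : x ∈ B := n1_subset_insert hx
  -- from any vertex of the new ball to x, inside B
  have ball_to_x : ∀ (z : V) (hz : z = u ∨ G.Adj z u),
      (G.induce B).Reachable ⟨z, mem_n1_insert.mpr (Or.inl hz)⟩ ⟨x, hxB⟩ := by
    intro z hz
    have hzu : (G.induce B).Reachable ⟨z, mem_n1_insert.mpr (Or.inl hz)⟩ ⟨u, humem⟩ := by
      rcases hz with rfl | hz
      · rfl
      · exact Adj.reachable (by exact hz)
    have h1 : (G.induce B).Adj ⟨u, humem⟩ ⟨u', hu'mem⟩ := huu'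
    have h2' : (G.induce B).Adj ⟨u', hu'mem⟩ ⟨x, hxB⟩ := hu'x
    exact hzu.trans (h1.reachable.trans h2'.reachable)
  -- lift old-invariant reachability
  have lift : ∀ (z1 z2 : V) (h1 : z1 ∈ N1set G S) (h2' : z2 ∈ N1set G S),
      G.Reachable z1 z2 →
      (G.induce B).Reachable ⟨z1, n1_subset_insert h1⟩ ⟨z2, n1_subset_insert h2'⟩ := by
    intro z1 z2 hz1 hz2 hr
    exact reach_mono (n1_subset_insert) (h2 z1 z2 hz1 hz2 hr)
  have hxu : G.Reachable x u := (hu'x.symm.reachable).trans huu'.symm.reachable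
  intro a b ha hb hab
  rcases mem_n1_insert.mp ha with ha' | ha' <;> rcases mem_n1_insert.mp hb with hb' | hb'
  · exact (ball_to_x a ha').trans (ball_to_x b hb').symm
  · -- a in new ball, b old
    have hra : G.Reachable u a := by
      rcases ha' with rfl | h
      · exact Reachable.refl _
      · exact h.symm.reachable
    have : G.Reachable x b := hxu.trans (hra.trans hab)
    exact (ball_to_x a ha').trans (lift x b hx hb' this)
  · -- a old, b in new ball
    have hrb : G.Reachable u b := by
      rcases hb' with rfl | h
      · exact Reachable.refl _
      · exact h.symm.reachable
    have : G.Reachable x a := hxu.trans (hrb.trans hab.symm)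
    exact ((ball_to_x b hb').trans (lift x a hx ha' this)).symm
  · exact lift a b ha' hb' hab

/-- Connectivity invariant is preserved when inserting a vertex in a fresh component. -/
lemma connInv_insert_fresh {S : Finset V} (h2 : ConnInv G S) {v : V}
    (hv : ∀ s ∈ S, ¬ G.Reachable v s) :
    ConnInv G (insert v S) := by
  set B := N1set G (insert v S) with hB
  have hvmem : v ∈ B := mem_n1_insert.mpr (Or.inl (Or.inl rfl))
  have ball_to_v : ∀ (z : V) (hz : z = v ∨ G.Adj z v),
      (G.induce B).Reachable ⟨z, mem_n1_insert.mpr (Or.inl hz)⟩ ⟨v, hvmem⟩ := by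
    intro z hz
    rcases hz with rfl | hz
    · rfl
    · exact Adj.reachable (by exact hz)
  have reach_v_of_new : ∀ (z : V), (z = v ∨ G.Adj z v) → G.Reachable v z := by
    rintro z (rfl | h)
    · exact Reachable.refl _
    · exact h.symm.reachable
  have reach_S_of_old : ∀ (z : V), z ∈ N1set G S → ∃ s ∈ S, G.Reachable z s := by
    rintro z ⟨s, hs, (rfl | h)⟩
    · exact ⟨z, hs, Reachable.refl _⟩
    · exact ⟨s, hs, h.reachable⟩
  intro a b ha hb hab
  rcases mem_n1_insert.mp ha with ha' | ha' <;> rcases mem_n1_insert.mp hb with hb' | hb'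
  · exact (ball_to_v a ha').trans (ball_to_v b hb').symm
  · exfalso
    obtain ⟨s, hs, hzs⟩ := reach_S_of_old b hb'
    exact hv s hs (((reach_v_of_new a ha').trans hab).trans hzs)
  · exfalso
    obtain ⟨s, hs, hzs⟩ := reach_S_of_old a ha'
    exact hv s hs (((reach_v_of_new b hb').trans hab.symm).trans hzs)
  · exact reach_mono (n1_subset_insert) (h2 a b ha' hb' hab)

/-- Along a walk from a far vertex into `S`, find a vertex at distance exactly 3. -/
lemma walk_extract (S : Finset V) :
    ∀ {v s0 : V}, G.Walk v s0 → ¬ Near2 G S v → Near2 G S s0 →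
      ∃ u u' x, ¬ Near2 G S u ∧ G.Adj u u' ∧ G.Adj u' x ∧ x ∈ N1set G S := by
  intro v s0 p
  induction p with
  | nil => exact fun h1 h2 => absurd h2 h1
  | @cons a c b h q ih =>
    intro hv hs0
    by_cases hc : Near2 G S c
    · obtain ⟨s, hs, hcase⟩ := hc
      rcases hcase with rfl | hadj | ⟨x, hx1, hx2⟩
      · exact absurd ⟨_, hs, Or.inr (Or.inl h)⟩ hv
      · exact absurd ⟨s, hs, Or.inr (Or.inr ⟨c, h, hadj⟩)⟩ hv
      · exact ⟨a, c, x, hv, h, hx1, ⟨s, hs, Or.inr hx2⟩⟩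
    · exact ih hc hs0

lemma s_near2 {S : Finset V} {s : V} (hs : s ∈ S) : Near2 G S s := ⟨s, hs, Or.inl rfl⟩

lemma grow {S : Finset V} (h1 : Sep3 G S) (h2 : ConnInv G S)
    {v : V} (hv : ¬ Near2 G S v) :
    ∃ u, u ∉ S ∧ Sep3 G (insert u S) ∧ ConnInv G (insert u S) := by
  by_cases hreach : ∃ s ∈ S, G.Reachable v s
  · obtain ⟨s0, hs0, ⟨p⟩⟩ := hreach
    obtain ⟨u, u', x, hu, ha1, ha2, ha3⟩ := walk_extract S p hv (s_near2 hs0)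
    exact ⟨u, fun h => hu (s_near2 h), sep3_insert h1 hu, connInv_insert_attach h2 ha1 ha2 ha3⟩
  · push_neg at hreach
    exact ⟨v, fun h => hv (s_near2 h), sep3_insert h1 hv, connInv_insert_fresh h2 hreach⟩

lemma exists_S [Fintype V] (G : SimpleGraph V) :
    ∃ S : Finset V, Sep3 G S ∧ ConnInv G S ∧ ∀ v, Near2 G S v := by
  classical
  have hne : ((Finset.univ : Finset (Finset V)).filter
      (fun S => Sep3 G S ∧ ConnInv G S)).Nonempty := by
    refine ⟨∅, Finset.mem_filter.mpr ⟨Finset.mem_univ _, ?_, ?_⟩⟩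
    · intro s hs; exact absurd hs (Finset.notMem_empty s)
    · intro x y hx; exact absurd hx (by rintro ⟨s, hs, -⟩; exact Finset.notMem_empty s hs)
  obtain ⟨S, hSmax⟩ := Finset.exists_maximal hne
  have hSmem := hSmax.prop
  have hmax := fun x (hx : x ∈ (Finset.univ : Finset (Finset V)).filter
      (fun S => Sep3 G S ∧ ConnInv G S)) (hlt : S < x) =>
    lt_irrefl _ (lt_of_lt_of_le hlt (hSmax.2 hx hlt.le))
  obtain ⟨-, h1, h2⟩ := Finset.mem_filter.mp hSmem
  refine ⟨S, h1, h2, ?_⟩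
  by_contra hbad
  push_neg at hbad
  obtain ⟨v, hv⟩ := hbad
  obtain ⟨u, hu, h1', h2'⟩ := grow h1 h2 hv
  exact hmax (insert u S) (Finset.mem_filter.mpr ⟨Finset.mem_univ _, h1', h2'⟩)
    (Finset.ssubset_insert hu)

lemma connected_congr {A B : Set V} (h : A = B) (hc : (G.induce A).Connected) :
    (G.induce B).Connected := by subst h; exact hc

lemma minor_step {k : ℕ} {S : Finset V}
    (h2 : ConnInv G S) (h3 : ∀ v, Near2 G S v)
    (hG : ¬ HasMinor G (⊤ : SimpleGraph (Fin (k + 2)))) :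
    ¬ HasMinor (G.induce {v | ¬ Near1 G S v}) (⊤ : SimpleGraph (Fin (k + 1))) := by
  rintro ⟨f, hne, hconn, hdisj, hadj⟩
  have connector : ∀ v : V, v ∈ {v | ¬ Near1 G S v} → ∃ x, G.Adj v x ∧ x ∈ N1set G S := by
    intro v hv
    obtain ⟨s, hs, hcase⟩ := h3 v
    rcases hcase with rfl | hadj' | ⟨x, hx1, hx2⟩
    · exact absurd ⟨v, hs, Or.inl rfl⟩ hv
    · exact absurd ⟨s, hs, Or.inr hadj'⟩ hv
    · exact ⟨x, hx1, ⟨s, hs, Or.inr hx2⟩⟩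
  have reach_in : ∀ (i : Fin (k+1)) (a b : ↥{v | ¬ Near1 G S v}), a ∈ f i → b ∈ f i →
      G.Reachable a.1 b.1 := by
    intro i a b ha hb
    have h := (hconn i).preconnected ⟨a, ha⟩ ⟨b, hb⟩
    exact reach_val (reach_val h)
  choose v hv using hne
  have reach0 : ∀ i, G.Reachable (v i).1 (v 0).1 := by
    intro i
    by_cases h0 : i = 0
    · subst h0; exact Reachable.refl _
    · obtain ⟨a, ha, b, hb, hab⟩ := hadj (show (⊤ : SimpleGraph (Fin (k+1))).Adj i 0 from h0)
      have hab' : G.Adj a.1 b.1 := hab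
      exact ((reach_in i (v i) a (hv i) ha).trans hab'.reachable).trans
        (reach_in 0 b (v 0) hb (hv 0))
  choose x hx1 hx2 using fun i => connector (v i).1 (v i).2
  have inv : ∀ i, (G.induce (N1set G S)).Reachable ⟨x 0, hx2 0⟩ ⟨x i, hx2 i⟩ := by
    intro i
    refine h2 _ _ _ _ ?_
    exact ((hx1 0).symm.reachable.trans (reach0 i).symm).trans (hx1 i).reachable
  set X : Set V :=
    Subtype.val '' {y : ↥(N1set G S) | (G.induce (N1set G S)).Reachable ⟨x 0, hx2 0⟩ y}
    with hX
  have hXsub : X ⊆ N1set G S := by rintro a ⟨y, -, rfl⟩; exact y.2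
  have hxmemX : ∀ i, x i ∈ X := fun i => ⟨⟨x i, hx2 i⟩, inv i, rfl⟩
  have hXdisj : ∀ i : Fin (k+1), Disjoint X (Subtype.val '' f i) := by
    intro i
    rw [Set.disjoint_left]
    rintro a haX ⟨b, -, rfl⟩
    exact b.2 (hXsub haX)
  apply hG
  refine ⟨fun j => Fin.lastCases X (fun i => Subtype.val '' f i) j, ?_, ?_, ?_, ?_⟩
  · intro j
    cases j using Fin.lastCases with
    | last => simp only [Fin.lastCases_last]; exact ⟨x 0, hxmemX 0⟩
    | cast i => simp only [Fin.lastCases_castSucc]; exact ⟨(v i).1, ⟨v i, hv i, rfl⟩⟩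
  · intro j
    cases j using Fin.lastCases with
    | last =>
      exact connected_congr (by simp [hX]) (connected_image
        (comp_connected (G.induce (N1set G S)) ⟨x 0, hx2 0⟩))
    | cast i =>
      exact connected_congr (by simp) (connected_image (hconn i))
  · intro j j' hjj'
    cases j using Fin.lastCases with
    | last =>
      cases j' using Fin.lastCases with
      | last => exact absurd rfl hjj'
      | cast i' => simp only [Fin.lastCases_last, Fin.lastCases_castSucc]; exact hXdisj i'
    | cast i =>
      cases j' using Fin.lastCases with
      | last => simp only [Fin.lastCases_last, Fin.lastCases_castSucc]; exact (hXdisj i).symm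
      | cast i' =>
        simp only [Fin.lastCases_castSucc]
        have hii' : i ≠ i' := fun h => hjj' (congrArg Fin.castSucc h)
        rw [Set.disjoint_left]
        rintro a ⟨b, hb, rfl⟩ ⟨b', hb', hbeq⟩
        have : b' = b := Subtype.ext hbeq
        subst this
        exact Set.disjoint_left.mp (hdisj hii') hb hb'
  · intro w w' hww'
    have hww'' : w ≠ w' := hww'
    cases w using Fin.lastCases with
    | last =>
      cases w' using Fin.lastCases with
      | last => exact absurd rfl hww''
      | cast i' =>
        simp only [Fin.lastCases_last, Fin.lastCases_castSucc]
        exact ⟨x i', hxmemX i', (v i').1, ⟨v i', hv i', rfl⟩, (hx1 i').symm⟩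
    | cast i =>
      cases w' using Fin.lastCases with
      | last =>
        simp only [Fin.lastCases_last, Fin.lastCases_castSucc]
        exact ⟨(v i).1, ⟨v i, hv i, rfl⟩, x i, hxmemX i, hx1 i⟩
      | cast i' =>
        simp only [Fin.lastCases_castSucc]
        have hii' : i ≠ i' := fun h => hww'' (congrArg Fin.castSucc h)
        obtain ⟨a, ha, b, hb, hab⟩ := hadj (show (⊤ : SimpleGraph (Fin (k+1))).Adj i i' from hii')
        exact ⟨a.1, ⟨a, ha, rfl⟩, b.1, ⟨b, hb, rfl⟩, hab⟩

lemma near1_unique {S : Finset V} (h1 : Sep3 G S) {v s t : V}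
    (hs : s ∈ S) (ht : t ∈ S) (hvs : v = s ∨ G.Adj v s) (hvt : v = t ∨ G.Adj v t) :
    s = t := by
  by_contra hne
  obtain ⟨hadj, hcom⟩ := h1 s hs t ht hne
  rcases hvs with h1' | h1' <;> rcases hvt with h2' | h2'
  · exact hne (h1'.symm.trans h2')
  · exact hadj (h1' ▸ h2')
  · exact hadj ((h2' ▸ h1') : G.Adj t s).symm
  · exact hcom v ⟨h1'.symm, h2'⟩

lemma mem_closedNbhd {G : SimpleGraph V} {u v : V} :
    u ∈ closedNbhd G v ↔ u = v ∨ G.Adj v u := by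
  unfold closedNbhd
  rw [Set.mem_insert_iff, SimpleGraph.mem_neighborSet]

theorem aux : ∀ (k : ℕ) {V : Type u} [Fintype V] (G : SimpleGraph V),
    ¬ HasMinor G (⊤ : SimpleGraph (Fin (k + 1))) →
    ∃ c : V → Option (Fin k), IsCFColoring G k c := by
  intro k
  induction k with
  | zero =>
    intro V _ G hG
    cases isEmpty_or_nonempty V with
    | inl h => exact ⟨fun _ => none, fun v => (h.false v).elim⟩
    | inr h =>
      exfalso
      apply hG
      obtain ⟨v⟩ := h
      refine ⟨fun _ => {v}, fun _ => ⟨v, rfl⟩, fun _ => ?_,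
        fun i j hij => absurd (Subsingleton.elim (α := Fin 1) i j) hij,
        fun i j hij => absurd (Subsingleton.elim (α := Fin 1) i j) hij⟩
      rw [connected_iff]
      refine ⟨fun a b => ?_, ⟨⟨v, rfl⟩⟩⟩
      have : a = b := Subtype.ext ((Set.mem_singleton_iff.mp a.2).trans
        (Set.mem_singleton_iff.mp b.2).symm)
      rw [this]
  | succ k ih =>
    intro V _ G hG
    classical
    obtain ⟨S, h1, h2, h3⟩ := exists_S G
    obtain ⟨c', hc'⟩ := ih (G.induce {v | ¬ Near1 G S v}) (minor_step h2 h3 hG)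
    refine ⟨fun v => if v ∈ S then some (Fin.last k) else
      if h : v ∈ {v | ¬ Near1 G S v} then (c' ⟨v, h⟩).map Fin.castSucc else none, ?_⟩
    intro v
    by_cases hv : Near1 G S v
    · obtain ⟨s, hs, hcase⟩ := hv
      refine ⟨s, ?_, Fin.last k, ?_, ?_⟩
      · exact mem_closedNbhd.mpr (hcase.imp Eq.symm id)
      · simp only [if_pos hs]
      · intro u hu hcu
        by_cases huS : u ∈ S
        · refine near1_unique h1 huS hs ?_ hcase
          exact (mem_closedNbhd.mp hu).imp Eq.symm id
        · exfalso
          simp only [if_neg huS] at hcu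
          by_cases huR : u ∈ {v | ¬ Near1 G S v}
          · rw [dif_pos huR] at hcu
            obtain ⟨a, -, hae⟩ := Option.map_eq_some_iff.mp hcu
            exact absurd hae (Fin.castSucc_lt_last a).ne
          · rw [dif_neg huR] at hcu
            cases hcu
    · have hvR : v ∈ {v | ¬ Near1 G S v} := hv
      obtain ⟨w', hw', col', hcol', huniq⟩ := hc' ⟨v, hvR⟩
      have hw'S : w'.1 ∉ S := fun hmem => w'.2 ⟨w'.1, hmem, Or.inl rfl⟩
      refine ⟨w'.1, ?_, Fin.castSucc col', ?_, ?_⟩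
      · rcases mem_closedNbhd.mp hw' with h | h
        · exact mem_closedNbhd.mpr (Or.inl (congrArg Subtype.val h))
        · exact mem_closedNbhd.mpr (Or.inr h)
      · simp only [if_neg hw'S, dif_pos w'.2, Subtype.coe_eta, hcol', Option.map_some]
      · intro u hu hcu
        by_cases huS : u ∈ S
        · simp only [if_pos huS] at hcu
          exact absurd (Option.some.inj hcu).symm (Fin.castSucc_lt_last col').ne
        · by_cases huR : u ∈ {v | ¬ Near1 G S v}
          · simp only [if_neg huS, dif_pos huR] at hcu
            obtain ⟨a, ha, hae⟩ := Option.map_eq_some_iff.mp hcu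
            have haa : a = col' := Fin.castSucc_injective _ hae
            subst haa
            have humem : (⟨u, huR⟩ : ↥{v | ¬ Near1 G S v}) ∈
                closedNbhd (G.induce {v | ¬ Near1 G S v}) ⟨v, hvR⟩ := by
              rcases mem_closedNbhd.mp hu with h | h
              · exact mem_closedNbhd.mpr (Or.inl (Subtype.ext h))
              · exact mem_closedNbhd.mpr (Or.inr h)
            exact congrArg Subtype.val (huniq ⟨u, huR⟩ humem ha)
          · simp only [if_neg huS, dif_neg huR] at hcu
            cases hcu

end CFH

/-- Conflict-free Hadwiger: every graph with no `K_{k+1}` minor admits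
a closed-neighborhood conflict-free `k`-coloring, i.e. `χ_CF(G) ≤ k`. -/
theorem cf_hadwiger {V : Type*} [Fintype V] (G : SimpleGraph V) (k : ℕ)
    (h : ¬ HasMinor G (⊤ : SimpleGraph (Fin (k + 1)))) :
    ∃ c : V → Option (Fin k), IsCFColoring G k c :=
  CFH.aux k G h
end

section
/- Every outerplanar graph admits a closed-neighborhood conflict-free coloring with two colors. -/
open SimpleGraph

/-- Outerplanarity, via the excluded-minor characterization: a finite simple graph is
outerplanar iff it has neither a `K₄` minor nor a `K_{2,3}` minor. -/
def IsOuterplanar {V : Type*} (G : SimpleGraph V) : Prop :=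
  ¬ HasMinor G (⊤ : SimpleGraph (Fin 4)) ∧
  ¬ HasMinor G (completeBipartiteGraph (Fin 2) (Fin 3))

set_option linter.unusedSectionVars false

namespace CFProof

variable {V : Type*} [Fintype V] {G : SimpleGraph V}


lemma mem_closedNbhd {u v : V} : u ∈ closedNbhd G v ↔ u = v ∨ G.Adj v u := by
  simp [closedNbhd]

lemma self_mem_closedNbhd (v : V) : v ∈ closedNbhd G v := by simp [closedNbhd]

/-- satisfaction of a single vertex -/
def Sat (G : SimpleGraph V) (c : V → Option (Fin 2)) (v : V) : Prop :=
  ∃ w ∈ closedNbhd G v, ∃ col : Fin 2, c w = some col ∧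
    ∀ u ∈ closedNbhd G v, c u = some col → u = w

lemma other_ne (κ : Fin 2) : 1 - κ ≠ κ := by fin_cases κ <;> decide

lemma other_other (κ : Fin 2) : 1 - (1 - κ) = κ := by fin_cases κ <;> decide

/-- induced singleton is connected -/
lemma connected_induce_singleton (a : V) : (G.induce {a}).Connected := by
  haveI : Nonempty ({a} : Set V) := ⟨⟨a, rfl⟩⟩
  constructor
  · intro x y
    have : x = y := Subtype.ext (by
      have hx := x.2; have hy := y.2
      simp only [Set.mem_singleton_iff] at hx hy
      rw [hx, hy])
    exact this ▸ Reachable.refl x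

/-- inclusion hom between induced graphs -/
def induceHomOfLE {s t : Set V} (h : s ⊆ t) : G.induce s →g G.induce t where
  toFun := fun x => ⟨x.1, h x.2⟩
  map_rel' := by
    intro a b hab
    exact hab

lemma connected_induce_insert {s : Set V} (hs : (G.induce s).Connected) (a : V)
    (hadj : ∃ b ∈ s, G.Adj a b) : (G.induce (insert a s)).Connected := by
  classical
  obtain ⟨b, hb, hab⟩ := hadj
  have hsub : s ⊆ insert a s := Set.subset_insert a s
  haveI : Nonempty (insert a s : Set V) := ⟨⟨b, hsub hb⟩⟩
  constructor
  · rintro ⟨x, hx⟩ ⟨y, hy⟩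
    have key : ∀ z (hz : z ∈ insert a s),
        (G.induce (insert a s)).Reachable ⟨z, hz⟩ ⟨b, hsub hb⟩ := by
      intro z hz
      rcases hz with rfl | hz
      · exact Adj.reachable (by exact hab)
      · have := hs.preconnected ⟨z, hz⟩ ⟨b, hb⟩
        exact this.map (induceHomOfLE hsub)
    exact (key x hx).trans (key y hy).symm




/-- A K₂,₃ minor from a connected set K and a vertex w (the two hubs) with three
common "neighbors" w1 w2 w3. -/
lemma k23_of (K : Set V) (hKconn : (G.induce K).Connected) (hKne : K.Nonempty)
    (w w1 w2 w3 : V)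
    (hw : w ∉ K) (h1 : w1 ∉ K) (h2 : w2 ∉ K) (h3 : w3 ∉ K)
    (hw1 : w1 ≠ w) (hw2 : w2 ≠ w) (hw3 : w3 ≠ w)
    (h12 : w1 ≠ w2) (h13 : w1 ≠ w3) (h23 : w2 ≠ w3)
    (a1 : G.Adj w w1) (a2 : G.Adj w w2) (a3 : G.Adj w w3)
    (b1 : ∃ k ∈ K, G.Adj k w1) (b2 : ∃ k ∈ K, G.Adj k w2) (b3 : ∃ k ∈ K, G.Adj k w3) :
    HasMinor G (completeBipartiteGraph (Fin 2) (Fin 3)) := by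
  refine ⟨Sum.elim ![{w}, K] ![{w1}, {w2}, {w3}], ?_, ?_, ?_, ?_⟩
  · rintro (i | i) <;> fin_cases i <;>
      simp_all [Set.singleton_nonempty]
  · rintro (i | i) <;> fin_cases i <;>
      first
        | exact connected_induce_singleton _
        | exact hKconn
  · rintro (i | i) (j | j) hij <;> fin_cases i <;> fin_cases j <;>
      simp_all [Set.disjoint_singleton_left, Set.disjoint_singleton_right,
        Set.disjoint_left, eq_comm] <;> aesop
  · rintro (i | i) (j | j) hadj
    · exact absurd hadj (by simp [completeBipartiteGraph])
    · fin_cases i <;> fin_cases j <;>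
        simp only [Sum.elim_inl, Sum.elim_inr, Matrix.cons_val_zero, Matrix.cons_val_one,
          Matrix.head_cons]
      · exact ⟨w, rfl, w1, rfl, a1⟩
      · exact ⟨w, rfl, w2, rfl, a2⟩
      · exact ⟨w, rfl, w3, rfl, a3⟩
      · obtain ⟨k, hk, hkw⟩ := b1; exact ⟨k, hk, w1, rfl, hkw⟩
      · obtain ⟨k, hk, hkw⟩ := b2; exact ⟨k, hk, w2, rfl, hkw⟩
      · obtain ⟨k, hk, hkw⟩ := b3; exact ⟨k, hk, w3, rfl, hkw⟩
    · fin_cases i <;> fin_cases j <;>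
        simp only [Sum.elim_inl, Sum.elim_inr, Matrix.cons_val_zero, Matrix.cons_val_one,
          Matrix.head_cons]
      · exact ⟨w1, rfl, w, rfl, a1.symm⟩
      · obtain ⟨k, hk, hkw⟩ := b1; exact ⟨w1, rfl, k, hk, hkw.symm⟩
      · exact ⟨w2, rfl, w, rfl, a2.symm⟩
      · obtain ⟨k, hk, hkw⟩ := b2; exact ⟨w2, rfl, k, hk, hkw.symm⟩
      · exact ⟨w3, rfl, w, rfl, a3.symm⟩
      · obtain ⟨k, hk, hkw⟩ := b3; exact ⟨w3, rfl, k, hk, hkw.symm⟩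
    · exact absurd hadj (by simp [completeBipartiteGraph])





/-- A K₄ minor from branch sets {a}, {b}, S, K. -/
lemma k4_of (K S : Set V) (hKconn : (G.induce K).Connected) (hSconn : (G.induce S).Connected)
    (hKne : K.Nonempty) (hSne : S.Nonempty) (a b : V)
    (haK : a ∉ K) (hbK : b ∉ K) (haS : a ∉ S) (hbS : b ∉ S) (hab : a ≠ b)
    (hSK : Disjoint S K)
    (eab : G.Adj a b)
    (eaS : ∃ s ∈ S, G.Adj a s) (ebS : ∃ s ∈ S, G.Adj b s)
    (eaK : ∃ k ∈ K, G.Adj k a) (ebK : ∃ k ∈ K, G.Adj k b)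
    (eSK : ∃ s ∈ S, ∃ k ∈ K, G.Adj k s) :
    HasMinor G (⊤ : SimpleGraph (Fin 4)) := by
  refine ⟨![{a}, {b}, S, K], ?_, ?_, ?_, ?_⟩
  · intro i; fin_cases i <;> simp_all [Set.singleton_nonempty]
  · intro i; fin_cases i <;>
      first
        | exact connected_induce_singleton _
        | exact hSconn
        | exact hKconn
  · intro i j hij
    fin_cases i <;> fin_cases j <;>
      simp_all [Set.disjoint_singleton_left, Set.disjoint_singleton_right, eq_comm] <;>
      first
        | exact hSK
        | exact hSK.symm
        | exact hab.symm
        | exact (Set.disjoint_left.mpr fun x hx hx' => hSK.le_bot ⟨hx, hx'⟩)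
  · intro i j hij
    have hij' : i ≠ j := by simpa using hij
    obtain ⟨sa, hsa, ha'⟩ := eaS
    obtain ⟨sb, hsb, hb'⟩ := ebS
    obtain ⟨ka, hka, ha''⟩ := eaK
    obtain ⟨kb, hkb, hb''⟩ := ebK
    obtain ⟨s3, hs3, k3, hk3, e3⟩ := eSK
    fin_cases i <;> fin_cases j <;> simp only [Matrix.cons_val_zero, Matrix.cons_val_one,
      Matrix.head_cons, Matrix.cons_val_two, Matrix.tail_cons, Matrix.cons_val_three] <;>
      first
        | exact absurd rfl hij'
        | exact ⟨a, rfl, b, rfl, eab⟩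
        | exact ⟨b, rfl, a, rfl, eab.symm⟩
        | exact ⟨a, rfl, sa, hsa, ha'⟩
        | exact ⟨sa, hsa, a, rfl, ha'.symm⟩
        | exact ⟨b, rfl, sb, hsb, hb'⟩
        | exact ⟨sb, hsb, b, rfl, hb'.symm⟩
        | exact ⟨a, rfl, ka, hka, ha''.symm⟩
        | exact ⟨ka, hka, a, rfl, ha''⟩
        | exact ⟨b, rfl, kb, hkb, hb''.symm⟩
        | exact ⟨kb, hkb, b, rfl, hb''⟩
        | exact ⟨s3, hs3, k3, hk3, e3.symm⟩
        | exact ⟨k3, hk3, s3, hs3, e3⟩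

/-- the vertex set of a chain-adjacent nonempty list induces a connected graph -/
lemma connected_induce_list (l : List V) (hc : l.Chain' G.Adj) (hne : l ≠ []) :
    (G.induce {v | v ∈ l}).Connected := by
  induction l with
  | nil => exact absurd rfl hne
  | cons a t ih =>
    cases t with
    | nil =>
      have : {v | v ∈ [a]} = ({a} : Set V) := by ext x; simp
      rw [this]; exact connected_induce_singleton a
    | cons b t' =>
      have hres : {v | v ∈ a :: b :: t'} = insert a {v | v ∈ b :: t'} := by ext x; simp
      rw [hres]
      have hc' := (List.isChain_cons_cons.mp hc)
      exact connected_induce_insert (ih hc'.2 (by simp)) a ⟨b, by simp, hc'.1⟩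





lemma chord_absurd (hK4 : ¬ HasMinor G (⊤ : SimpleGraph (Fin 4)))
    (K W : Set V) (hKconn : (G.induce K).Connected) (hKne : K.Nonempty)
    (hWK : ∀ w ∈ W, ∃ k ∈ K, G.Adj k w) (hWdisj : ∀ w ∈ W, w ∉ K)
    (a b : V) (t : List V) (hc : (a :: b :: t).Chain' G.Adj) (hnd : (a :: b :: t).Nodup)
    (hlW : ∀ v ∈ a :: b :: t, v ∈ W) (z : V) (hz : z ∈ t) (haz : G.Adj a z) : False := by
  classical
  obtain ⟨t1, t2, rfl⟩ := List.append_of_mem hz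
  set m : List V := t1 ++ [z] with hm
  have hmt : t1 ++ z :: t2 = m ++ t2 := by simp [hm]
  have hmne : m ≠ [] := by simp [hm]
  have hzm : z ∈ m := by simp [hm]
  -- chain facts
  have hab : G.Adj a b := (List.isChain_cons_cons.mp hc).1
  have hcb : (b :: (m ++ t2)).Chain' G.Adj := by
    have := (List.isChain_cons_cons.mp hc).2
    rwa [hmt] at this
  have hbm : (b :: m).Chain' G.Adj := by
    have hpre : (b :: m) <+: (b :: (m ++ t2)) := ⟨t2, by simp⟩
    exact hcb.prefix hpre
  have hmchain : m.Chain' G.Adj := hbm.tail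
  obtain ⟨c, m', hm'⟩ := List.exists_cons_of_ne_nil hmne
  have hbc : G.Adj b c := by
    rw [hm'] at hbm
    exact (List.isChain_cons_cons.mp hbm).1
  -- memberships in W
  have haW : a ∈ W := hlW a (by simp)
  have hbW : b ∈ W := hlW b (by simp)
  have hmW : ∀ v ∈ m, v ∈ W := by
    intro v hv
    have h2 : v ∈ m ++ t2 := List.mem_append_left _ hv
    rw [← hmt] at h2
    exact hlW v (by simp [h2])
  -- nodup facts
  have hnd1 : a ∉ b :: (t1 ++ z :: t2) := (List.nodup_cons.mp hnd).1
  have hnd2 : b ∉ t1 ++ z :: t2 := (List.nodup_cons.mp (List.nodup_cons.mp hnd).2).1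
  have hamem : a ∉ {v | v ∈ m} := by
    intro hv
    apply hnd1
    simp only [Set.mem_setOf_eq, hm] at hv
    have : a ∈ m ++ t2 := List.mem_append_left _ hv
    rw [← hmt] at this
    simp [this]
  have hbmem : b ∉ {v | v ∈ m} := by
    intro hv
    apply hnd2
    simp only [Set.mem_setOf_eq, hm] at hv
    have : b ∈ m ++ t2 := List.mem_append_left _ hv
    rwa [← hmt] at this
  have hane : a ≠ b := by
    intro h; exact hnd1 (h ▸ (by simp))
  -- apply k4
  apply hK4
  refine k4_of K {v | v ∈ m} hKconn (connected_induce_list m hmchain hmne) hKne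
    ⟨z, hzm⟩ a b (hWdisj a haW) (hWdisj b hbW) hamem hbmem hane ?_ hab
    ⟨z, hzm, haz⟩ ⟨c, by simp [hm'], hbc⟩ ?_ ?_ ?_
  · rw [Set.disjoint_left]
    intro x hx hxK
    exact hWdisj x (hmW x hx) hxK
  · obtain ⟨k, hk, hka⟩ := hWK a haW
    exact ⟨k, hk, hka⟩
  · obtain ⟨k, hk, hkb⟩ := hWK b hbW
    exact ⟨k, hk, hkb⟩
  · obtain ⟨k, hk, hkz⟩ := hWK z (hmW z hzm)
    exact ⟨z, hzm, k, hk, hkz⟩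





/-- no wall vertex has three distinct wall neighbours -/
lemma wall_three (hK23 : ¬ HasMinor G (completeBipartiteGraph (Fin 2) (Fin 3)))
    (K W : Set V) (hKconn : (G.induce K).Connected) (hKne : K.Nonempty)
    (hWK : ∀ w ∈ W, ∃ k ∈ K, G.Adj k w) (hWdisj : ∀ w ∈ W, w ∉ K)
    (w x y z : V) (hw : w ∈ W) (hx : x ∈ W) (hy : y ∈ W) (hz : z ∈ W)
    (hxy : x ≠ y) (hxz : x ≠ z) (hyz : y ≠ z)
    (ax : G.Adj w x) (ay : G.Adj w y) (az : G.Adj w z) : False := by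
  exact hK23 (k23_of K hKconn hKne w x y z (hWdisj w hw) (hWdisj x hx) (hWdisj y hy)
    (hWdisj z hz) ax.ne' ay.ne' az.ne' hxy hxz hyz ax ay az
    (hWK x hx) (hWK y hy) (hWK z hz))

lemma extend_aux (W : Set V) :
    ∀ (n : ℕ) (l : List V) (h : l ≠ []), l.Chain' G.Adj → l.Nodup → (∀ v ∈ l, v ∈ W) →
    W.ncard ≤ n + l.length →
    ∃ (l' : List V) (h' : l' ≠ []), l'.Chain' G.Adj ∧ l'.Nodup ∧ (∀ v ∈ l', v ∈ W) ∧
      (∀ v ∈ l, v ∈ l') ∧ l'.getLast h' = l.getLast h ∧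
      (∀ x ∈ W, G.Adj (l'.head h') x → x ∈ l') := by
  intro n
  induction n with
  | zero =>
    intro l h hc hnd hW hcard
    by_cases hmax : ∀ x ∈ W, G.Adj (l.head h) x → x ∈ l
    · exact ⟨l, h, hc, hnd, hW, fun v hv => hv, rfl, hmax⟩
    · exfalso
      push_neg at hmax
      obtain ⟨x, hxW, _, hxl⟩ := hmax
      classical
      have h1 : l.toFinset.card = l.length := List.toFinset_card_of_nodup hnd
      have h2 : insert x l.toFinset ⊆ W.toFinset := by
        intro v hv
        rcases Finset.mem_insert.mp hv with rfl | hv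
        · simpa using hxW
        · simp only [Set.mem_toFinset]
          exact hW v (List.mem_toFinset.mp hv)
      have h3 : (insert x l.toFinset).card = l.length + 1 := by
        rw [Finset.card_insert_of_notMem (by simpa using hxl), h1]
      have h4 : W.ncard = W.toFinset.card := Set.ncard_eq_toFinset_card' W
      have := Finset.card_le_card h2
      omega
  | succ n ih =>
    intro l h hc hnd hW hcard
    by_cases hmax : ∀ x ∈ W, G.Adj (l.head h) x → x ∈ l
    · exact ⟨l, h, hc, hnd, hW, fun v hv => hv, rfl, hmax⟩
    · push_neg at hmax
      obtain ⟨x, hxW, hadj, hxl⟩ := hmax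
      obtain ⟨a, t, rfl⟩ := List.exists_cons_of_ne_nil h
      have hc' : (x :: a :: t).Chain' G.Adj := List.isChain_cons_cons.mpr ⟨by
        simpa using hadj.symm, hc⟩
      have hnd' : (x :: a :: t).Nodup := List.nodup_cons.mpr ⟨hxl, hnd⟩
      have hW' : ∀ v ∈ x :: a :: t, v ∈ W := by
        intro v hv
        rcases List.mem_cons.mp hv with rfl | hv
        · exact hxW
        · exact hW v hv
      obtain ⟨l', h', c1, c2, c3, c4, c5, c6⟩ := ih (x :: a :: t) (by simp) hc' hnd' hW'
        (by simp only [List.length_cons] at hcard ⊢; omega)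
      refine ⟨l', h', c1, c2, c3, fun v hv => c4 v (by simp [hv]), ?_, c6⟩
      rw [c5, List.getLast_cons h]





lemma exists_maximal_chain (W : Set V) (w0 : V) (hw0 : w0 ∈ W) :
    ∃ (l : List V) (h : l ≠ []), l.Chain' G.Adj ∧ l.Nodup ∧ (∀ v ∈ l, v ∈ W) ∧ w0 ∈ l ∧
      (∀ x ∈ W, G.Adj (l.head h) x → x ∈ l) ∧ (∀ x ∈ W, G.Adj (l.getLast h) x → x ∈ l) := by
  obtain ⟨l1, h1, c1, n1, w1, sub1, last1, hmax1⟩ :=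
    extend_aux (G := G) W W.ncard [w0] (by simp) (by simp [List.Chain']) (by simp) (by simpa using hw0)
      (by simp)
  have h2 : l1.reverse ≠ [] := by simpa using h1
  have c2 : l1.reverse.Chain' G.Adj := by
    exact List.isChain_reverse.mpr (List.IsChain.imp (fun a b hab => hab.symm) c1)
  have n2 : l1.reverse.Nodup := List.nodup_reverse.mpr n1
  have w2 : ∀ v ∈ l1.reverse, v ∈ W := fun v hv => w1 v (List.mem_reverse.mp hv)
  have lastmax2 : ∀ x ∈ W, G.Adj (l1.reverse.getLast h2) x → x ∈ l1.reverse := by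
    intro x hx hadj
    rw [List.getLast_reverse] at hadj
    exact List.mem_reverse.mpr (hmax1 x hx hadj)
  obtain ⟨l3, h3, c3, n3, w3, sub3, last3, hmax3⟩ :=
    extend_aux (G := G) W W.ncard l1.reverse h2 c2 n2 w2 (by simp)
  refine ⟨l3, h3, c3, n3, w3, ?_, hmax3, ?_⟩
  · exact sub3 w0 (List.mem_reverse.mpr (sub1 w0 (by simp)))
  · intro x hx hadj
    rw [last3] at hadj
    exact sub3 x (lastmax2 x hx hadj)

/-- no chords in a maximal chain, via `chord_absurd` -/
lemma no_chord (hK4 : ¬ HasMinor G (⊤ : SimpleGraph (Fin 4)))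
    (K W : Set V) (hKconn : (G.induce K).Connected) (hKne : K.Nonempty)
    (hWK : ∀ w ∈ W, ∃ k ∈ K, G.Adj k w) (hWdisj : ∀ w ∈ W, w ∉ K)
    (l : List V) (hc : l.Chain' G.Adj) (hnd : l.Nodup) (hlW : ∀ v ∈ l, v ∈ W)
    (i j : ℕ) (hi : i < l.length) (hj : j < l.length) (hij : i + 2 ≤ j) :
    ¬ G.Adj l[i] l[j] := by
  intro hadj
  have hi1 : i + 1 < l.length := by omega
  have hd0 : l.drop i = l[i] :: l.drop (i + 1) := List.drop_eq_getElem_cons hi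
  have hd1 : l.drop (i + 1) = l[i + 1] :: l.drop (i + 2) := List.drop_eq_getElem_cons hi1
  have hshape : l.drop i = l[i] :: l[i + 1] :: l.drop (i + 2) := by rw [hd0, hd1]
  have hsub : (l.drop i).Sublist l := List.drop_sublist i l
  have hcd : (l.drop i).Chain' G.Adj := hc.suffix (List.drop_suffix i l)
  have hndd : (l.drop i).Nodup := hnd.sublist hsub
  have hWd : ∀ v ∈ l.drop i, v ∈ W := fun v hv => hlW v (hsub.mem hv)
  have hzmem : l[j] ∈ l.drop (i + 2) := by
    have hjlen : j - (i + 2) < (l.drop (i + 2)).length := by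
      rw [List.length_drop]; omega
    have : (l.drop (i + 2))[j - (i+2)]'hjlen = l[j] := by
      rw [List.getElem_drop]
      congr 1
      omega
    rw [← this]
    exact List.getElem_mem hjlen
  rw [hshape] at hcd hndd hWd
  exact chord_absurd hK4 K W hKconn hKne hWK hWdisj l[i] l[i+1] (l.drop (i+2))
    hcd hndd hWd l[j] hzmem hadj





/-- all wall-neighbours of vertices of a maximal chain lie in the chain -/
lemma getElem_congr' (l : List V) {a b : ℕ} (hab : a = b) (ha : a < l.length) :
    l[a]'ha = l[b]'(hab ▸ ha) := by subst hab; rfl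

lemma chain_closed (hK23 : ¬ HasMinor G (completeBipartiteGraph (Fin 2) (Fin 3)))
    (K W : Set V) (hKconn : (G.induce K).Connected) (hKne : K.Nonempty)
    (hWK : ∀ w ∈ W, ∃ k ∈ K, G.Adj k w) (hWdisj : ∀ w ∈ W, w ∉ K)
    (l : List V) (h : l ≠ []) (hc : l.Chain' G.Adj) (hnd : l.Nodup) (hlW : ∀ v ∈ l, v ∈ W)
    (hmaxh : ∀ x ∈ W, G.Adj (l.head h) x → x ∈ l)
    (hmaxl : ∀ x ∈ W, G.Adj (l.getLast h) x → x ∈ l) :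
    ∀ v ∈ l, ∀ x ∈ W, G.Adj v x → x ∈ l := by
  intro v hv x hx hadj
  obtain ⟨i, hi, rfl⟩ := List.mem_iff_getElem.mp hv
  by_cases hi0 : i = 0
  · subst hi0
    exact hmaxh x hx (by rwa [List.head_eq_getElem])
  by_cases hilast : i = l.length - 1
  · apply hmaxl x hx
    rw [List.getLast_eq_getElem]
    rwa [getElem_congr' l hilast hi] at hadj
  -- interior
  by_contra hxl
  have hi1 : i - 1 < l.length := by omega
  have hi2 : i + 1 < l.length := by omega
  have hgc := List.isChain_iff_getElem.mp hc
  have a1 : G.Adj l[i] l[i-1] := by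
    have h5 := hgc (i-1) (by omega)
    rw [getElem_congr' l (show i - 1 + 1 = i by omega) (by omega)] at h5
    exact h5.symm
  have a2 : G.Adj l[i] l[i+1] := by
    have := hgc i (by omega)
    simpa using this
  have d12 : l[i-1] ≠ l[i+1] := by
    rw [Ne, hnd.getElem_inj_iff]
    omega
  exact wall_three hK23 K W hKconn hKne hWK hWdisj l[i] l[i-1] l[i+1] x
    (hlW _ (List.getElem_mem hi)) (hlW _ (List.getElem_mem hi1)) (hlW _ (List.getElem_mem hi2))
    hx d12 (fun hh => hxl (hh ▸ List.getElem_mem hi1)) (fun hh => hxl (hh ▸ List.getElem_mem hi2))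
    a1 a2 hadj

/-- arithmetic: in every window {i-1,i,i+1} ∩ [0,n) there is exactly one index ≡ r (mod 3),
where r = 1 if 3 ∣ n else 0. -/
lemma nat_window (n i : ℕ) (hi : i < n) (r : ℕ) (hr : r = if n % 3 = 0 then 1 else 0) :
    ∃ j, j < n ∧ j % 3 = r ∧ (j = i ∨ j + 1 = i ∨ i + 1 = j) ∧
      (∀ j', j' < n → j' % 3 = r → (j' = i ∨ j' + 1 = i ∨ i + 1 = j') → j' = j) := by
  by_cases h3 : n % 3 = 0 <;> simp only [h3, if_true, if_false] at hr <;>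
    (have hcase : i % 3 = 0 ∨ i % 3 = 1 ∨ i % 3 = 2 := by omega) <;>
    rcases hcase with hc | hc | hc
  · exact ⟨i + 1, by omega, by omega, by omega, fun j' u1 u2 u3 => by omega⟩
  · exact ⟨i, by omega, by omega, by omega, fun j' u1 u2 u3 => by omega⟩
  · exact ⟨i - 1, by omega, by omega, by omega, fun j' u1 u2 u3 => by omega⟩
  · exact ⟨i, by omega, by omega, by omega, fun j' u1 u2 u3 => by omega⟩
  · exact ⟨i - 1, by omega, by omega, by omega, fun j' u1 u2 u3 => by omega⟩
  · exact ⟨i + 1, by omega, by omega, by omega, fun j' u1 u2 u3 => by omega⟩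





lemma eds (hK4 : ¬ HasMinor G (⊤ : SimpleGraph (Fin 4)))
    (hK23 : ¬ HasMinor G (completeBipartiteGraph (Fin 2) (Fin 3))) :
    ∀ (n : ℕ) (W K : Set V), W.ncard ≤ n → (G.induce K).Connected → K.Nonempty →
    (∀ w ∈ W, ∃ k ∈ K, G.Adj k w) → (∀ w ∈ W, w ∉ K) →
    ∃ T : Set V, T ⊆ W ∧ ∀ w ∈ W, ∃ x ∈ T, (x = w ∨ G.Adj w x) ∧
      (∀ y ∈ T, (y = w ∨ G.Adj w y) → y = x) := by
  intro n
  induction n with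
  | zero =>
    intro W K hcard _ _ _ _
    have : W = ∅ := by
      rcases W.eq_empty_or_nonempty with h | h
      · exact h
      · exact absurd (Set.ncard_pos (W.toFinite) |>.mpr h) (by omega)
    exact ⟨∅, by simp, by simp [this]⟩
  | succ n ih =>
    intro W K hcard hKconn hKne hWK hWdisj
    rcases W.eq_empty_or_nonempty with hWe | ⟨w0, hw0⟩
    · exact ⟨∅, by simp, by simp [hWe]⟩
    obtain ⟨l, h, hc, hnd, hlW, hw0l, hmaxh, hmaxl⟩ := exists_maximal_chain (G := G) W w0 hw0
    have hcl := chain_closed hK23 K W hKconn hKne hWK hWdisj l h hc hnd hlW hmaxh hmaxl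
    set W' : Set V := W \ {v | v ∈ l} with hW'
    have hW'card : W'.ncard ≤ n := by
      have hlt : W'.ncard < W.ncard := by
        apply Set.ncard_lt_ncard _ (W.toFinite)
        constructor
        · exact Set.diff_subset
        · intro hsub
          exact (hsub hw0).2 hw0l
      omega
    obtain ⟨T', hT'sub, hT'⟩ := ih W' K hW'card hKconn hKne
      (fun w hw => hWK w hw.1) (fun w hw => hWdisj w hw.1)
    set r : ℕ := if l.length % 3 = 0 then 1 else 0 with hr
    set Tl : Set V := {v | ∃ j, ∃ hj : j < l.length, j % 3 = r ∧ l[j] = v} with hTl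
    have hTlsub : Tl ⊆ {v | v ∈ l} := by
      rintro v ⟨j, hj, _, rfl⟩
      exact List.getElem_mem hj
    refine ⟨Tl ∪ T', ?_, ?_⟩
    · intro v hv
      rcases hv with hv | hv
      · exact hlW v (hTlsub hv)
      · exact (hT'sub hv).1
    intro w hw
    by_cases hwl : w ∈ l
    · obtain ⟨i, hi, rfl⟩ := List.mem_iff_getElem.mp hwl
      obtain ⟨j, hj, hj3, hwin, huniq⟩ := nat_window l.length i hi r hr
      have hgc := List.isChain_iff_getElem.mp hc
      have hadj_consec : ∀ (a : ℕ) (ha : a + 1 < l.length), G.Adj (l[a]'(by omega)) l[a+1] := by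
        intro a ha
        have := hgc a (by omega)
        simpa using this
      refine ⟨l[j], Or.inl ⟨j, hj, hj3, rfl⟩, ?_, ?_⟩
      · rcases hwin with rfl | hji | hij
        · exact Or.inl rfl
        · refine Or.inr ?_
          have h5 := hadj_consec j (by omega)
          have h6 : l[j+1]'(by omega) = l[i] := getElem_congr' l hji (by omega)
          exact (h6 ▸ h5).symm
        · refine Or.inr ?_
          have h5 := hadj_consec i (by omega)
          have h6 : l[i+1]'(by omega) = l[j] := getElem_congr' l hij (by omega)
          exact h6 ▸ h5
      · rintro y (⟨j', hj', hj'3, rfl⟩ | hyT') hcond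
        · -- both in the chain
          have hj'win : l[j'] = l[i] ∨ j' + 1 = i ∨ i + 1 = j' := by
            rcases hcond with h1 | h1
            · exact Or.inl h1
            · -- adjacency: no chords
              rcases lt_trichotomy i j' with hlt | heq | hgt
              · by_cases hcons : i + 1 = j'
                · exact Or.inr (Or.inr hcons)
                · exact absurd h1 (no_chord hK4 K W hKconn hKne hWK hWdisj l hc hnd hlW
                    i j' hi hj' (by omega))
              · exact Or.inl (getElem_congr' l heq.symm hj')
              · by_cases hcons : j' + 1 = i
                · exact Or.inr (Or.inl hcons)
                · exact absurd h1.symm (no_chord hK4 K W hKconn hKne hWK hWdisj l hc hnd hlW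
                    j' i hj' hi (by omega))
          have hj'i : j' = i ∨ j' + 1 = i ∨ i + 1 = j' := by
            rcases hj'win with h1 | h1 | h1
            · exact Or.inl (hnd.getElem_inj_iff.mp h1)
            · exact Or.inr (Or.inl h1)
            · exact Or.inr (Or.inr h1)
          have := huniq j' hj' hj'3 hj'i
          subst this
          rfl
        · -- y in T' : impossible since y would be a wall-neighbour of the chain
          exfalso
          have hyW' := hT'sub hyT'
          rcases hcond with rfl | h1
          · exact hyW'.2 hwl
          · exact hyW'.2 (hcl (l[i]) hwl y hyW'.1 h1)
    · -- w not in the chain : use T'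
      have hwW' : w ∈ W' := ⟨hw, hwl⟩
      obtain ⟨x, hxT', hxcond, hxuniq⟩ := hT' w hwW'
      refine ⟨x, Or.inr hxT', hxcond, ?_⟩
      rintro y (⟨j', hj', hj'3, rfl⟩ | hyT') hcond
      · exfalso
        rcases hcond with rfl | h1
        · exact hwl (List.getElem_mem hj')
        · exact hwl (hcl (l[j']) (List.getElem_mem hj') w hw h1.symm)
      · exact hxuniq y hyT' hcond





lemma connected_induce_union (K S : Set V) (hKconn : (G.induce K).Connected)
    (hadj : ∀ s ∈ S, ∃ k ∈ K, G.Adj k s) : (G.induce (K ∪ S)).Connected := by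
  classical
  have hfin : S.Finite := Set.toFinite S
  revert hadj
  refine Set.Finite.induction_on (motive := fun S _ =>
    (∀ s ∈ S, ∃ k ∈ K, G.Adj k s) → (G.induce (K ∪ S)).Connected) S hfin ?_ ?_
  · intro _
    rw [Set.union_empty]
    exact hKconn
  · intro a s ha hs ih hadj
    have h1 : K ∪ insert a s = insert a (K ∪ s) := by
      ext x; simp [or_comm, or_assoc, or_left_comm]
    rw [h1]
    obtain ⟨k, hk, hka⟩ := hadj a (by simp)
    exact connected_induce_insert (ih (fun x hx => hadj x (by simp [hx]))) a
      ⟨k, Or.inl hk, hka.symm⟩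




lemma master (hK4 : ¬ HasMinor G (⊤ : SimpleGraph (Fin 4)))
    (hK23 : ¬ HasMinor G (completeBipartiteGraph (Fin 2) (Fin 3))) :
    ∀ (n : ℕ) (R K : Set V) (κ : Fin 2), R.ncard ≤ n →
    Disjoint R K → (∀ a ∈ R, ∀ b, G.Adj a b → b ∈ R ∪ K) →
    (K = ∅ ∨ ((G.induce K).Connected ∧ K.Nonempty)) →
    ∃ c : V → Option (Fin 2),
      (∀ v, v ∉ R → c v = none) ∧
      (∀ v ∈ R, (¬ ∃ k ∈ K, G.Adj k v) → Sat G c v) ∧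
      (∀ v ∈ R, (∃ k ∈ K, G.Adj k v) → c v ≠ some κ) ∧
      (∀ v ∈ R, (∃ k ∈ K, G.Adj k v) →
        ∃ x ∈ closedNbhd G v, c x = some (1 - κ) ∧
          ∀ u ∈ closedNbhd G v, c u = some (1 - κ) → u = x) := by
  intro n
  induction n with
  | zero =>
    intro R K κ hcard _ _ _
    have hRe : R = ∅ := by
      rcases R.eq_empty_or_nonempty with h | h
      · exact h
      · exact absurd (Set.ncard_pos (R.toFinite) |>.mpr h) (by omega)
    subst hRe
    exact ⟨fun _ => none, fun _ _ => rfl, by simp, by simp, by simp⟩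
  | succ n ih =>
    intro R K κ hcard hdisj hclosed hK
    rcases R.eq_empty_or_nonempty with hRe | hRne
    · subst hRe
      exact ⟨fun _ => none, fun _ _ => rfl, by simp, by simp, by simp⟩
    classical
    set Wl : Set V := {v ∈ R | ∃ k ∈ K, G.Adj k v} with hWl
    by_cases hWe : Wl = ∅
    · -- CASE A : no wall, pick a root
      obtain ⟨r, hr⟩ := hRne
      have hnoK : ∀ v ∈ R, ¬ ∃ k ∈ K, G.Adj k v := by
        intro v hv hex
        have hmm : v ∈ Wl := ⟨hv, hex⟩
        rw [hWe] at hmm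
        exact absurd hmm (Set.notMem_empty v)
      have hAR : ∀ a, G.Adj r a → a ∈ R := by
        intro a hra
        rcases hclosed r hr a hra with h | h
        · exact h
        · exact absurd ⟨a, h, hra.symm⟩ (hnoK r hr)
      have hNR : closedNbhd G r ⊆ R := by
        intro a haN
        rcases mem_closedNbhd.mp haN with rfl | h
        · exact hr
        · exact hAR a h
      set R' : Set V := R \ closedNbhd G r with hR'
      set K' : Set V := closedNbhd G r with hK'
      have hsscard : R'.ncard ≤ n := by
        have : R'.ncard < R.ncard := by
          apply Set.ncard_lt_ncard _ (R.toFinite)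
          exact ⟨Set.diff_subset, fun hsub => (hsub hr).2 (self_mem_closedNbhd r)⟩
        omega
      have hdisj' : Disjoint R' K' := Set.disjoint_left.mpr (fun a ha => ha.2)
      have hclosed' : ∀ a ∈ R', ∀ b, G.Adj a b → b ∈ R' ∪ K' := by
        intro a ha b hab
        rcases hclosed a ha.1 b hab with h | h
        · by_cases hbK : b ∈ K'
          · exact Or.inr hbK
          · exact Or.inl ⟨h, hbK⟩
        · exact absurd ⟨b, h, hab.symm⟩ (hnoK a ha.1)
      have hK'conn : (G.induce K').Connected := by
        have : K' = {r} ∪ G.neighborSet r := by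
          rw [hK']; rfl
        rw [this]
        exact connected_induce_union {r} (G.neighborSet r) (connected_induce_singleton r)
          (fun s hs => ⟨r, rfl, hs⟩)
      obtain ⟨c', p1, p2, p3, p4⟩ := ih R' K' κ hsscard hdisj' hclosed'
        (Or.inr ⟨hK'conn, ⟨r, self_mem_closedNbhd r⟩⟩)
      refine ⟨fun v => if v = r then some κ else c' v, ?_, ?_, ?_, ?_⟩
      · intro v hv
        have hvr : v ≠ r := fun h => hv (h ▸ hr)
        simp only [hvr, if_false]
        exact p1 v (fun hv' => hv hv'.1)
      · intro v hv _
        by_cases hvr : v = r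
        · refine ⟨r, by rw [hvr]; exact self_mem_closedNbhd r, κ, by simp, ?_⟩
          intro u hu hcu
          by_contra hur
          simp only [hur, if_false] at hcu
          have huR' : u ∈ R' := by
            by_contra h'
            rw [p1 u h'] at hcu
            cases hcu
          rw [hvr] at hu
          exact huR'.2 hu
        by_cases hvN : v ∈ closedNbhd G r
        · -- v is an uncoloured neighbour of the root
          have hvadj : G.Adj r v := by
            rcases mem_closedNbhd.mp hvN with h | h
            · exact absurd h hvr
            · exact h
          refine ⟨r, mem_closedNbhd.mpr (Or.inr hvadj.symm), κ, by simp, ?_⟩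
          intro u hu hcu
          by_contra hur
          simp only [hur, if_false] at hcu
          have huR' : u ∈ R' := by
            by_contra h'
            rw [p1 u h'] at hcu
            cases hcu
          -- u ∈ R' is adjacent to v ∈ K' (or equals v), so it is in the new wall
          have huW : ∃ k ∈ K', G.Adj k u := by
            rcases mem_closedNbhd.mp hu with rfl | h
            · exact absurd (huR'.2 hvN) not_false
            · exact ⟨v, hvN, h⟩
          exact (p3 u huR' huW) hcu
        · -- v ∈ R'
          have hvR' : v ∈ R' := ⟨hv, hvN⟩
          have hrnotin : r ∉ closedNbhd G v := by
            rw [mem_closedNbhd]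
            rintro (rfl | h)
            · exact hvr rfl
            · exact hvN (mem_closedNbhd.mpr (Or.inr h.symm))
          by_cases hvW : ∃ k ∈ K', G.Adj k v
          · obtain ⟨x, hx, hcx, hux⟩ := p4 v hvR' hvW
            refine ⟨x, hx, 1 - κ, ?_, ?_⟩
            · have hxr : x ≠ r := fun h => hrnotin (h ▸ hx)
              simp only [hxr, if_false]
              exact hcx
            · intro u hu hcu
              have hur : u ≠ r := fun h => hrnotin (h ▸ hu)
              simp only [hur, if_false] at hcu
              exact hux u hu hcu
          · obtain ⟨w', hw', col, hcol, huniq⟩ := p2 v hvR' hvW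
            refine ⟨w', hw', col, ?_, ?_⟩
            · have hwr : w' ≠ r := fun h => hrnotin (h ▸ hw')
              simp only [hwr, if_false]
              exact hcol
            · intro u hu hcu
              have hur : u ≠ r := fun h => hrnotin (h ▸ hu)
              simp only [hur, if_false] at hcu
              exact huniq u hu hcu
      · intro v hv hex
        have hvW : v ∈ Wl := ⟨hv, hex⟩
        rw [hWe] at hvW
        exact absurd hvW (Set.notMem_empty v)
      · intro v hv hex
        have hvW : v ∈ Wl := ⟨hv, hex⟩
        rw [hWe] at hvW
        exact absurd hvW (Set.notMem_empty v)
    · -- CASE B : colour the wall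
      have hWne : Wl.Nonempty := Set.nonempty_iff_ne_empty.mpr hWe
      have hKne : K.Nonempty ∧ (G.induce K).Connected := by
        rcases hK with rfl | ⟨h1, h2⟩
        · obtain ⟨w, hw⟩ := hWne
          obtain ⟨k, hk, _⟩ := hw.2
          exact absurd hk (Set.notMem_empty k)
        · exact ⟨h2, h1⟩
      have hWdisjK : ∀ w ∈ Wl, w ∉ K := by
        intro w hw
        exact fun hwK => (Set.disjoint_left.mp hdisj hw.1) hwK
      obtain ⟨T, hTsub, hT⟩ := eds hK4 hK23 Wl.ncard Wl K le_rfl hKne.2 hKne.1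
        (fun w hw => hw.2) hWdisjK
      set R' : Set V := R \ Wl with hR'
      set K'' : Set V := K ∪ Wl with hK''
      have hsscard : R'.ncard ≤ n := by
        have : R'.ncard < R.ncard := by
          apply Set.ncard_lt_ncard _ (R.toFinite)
          obtain ⟨w, hw⟩ := hWne
          exact ⟨Set.diff_subset, fun hsub => (hsub hw.1).2 hw⟩
        omega
      have hdisj' : Disjoint R' K'' := by
        rw [Set.disjoint_left]
        rintro a ha (hK | hW)
        · exact Set.disjoint_left.mp hdisj ha.1 hK
        · exact ha.2 hW
      have hclosed' : ∀ a ∈ R', ∀ b, G.Adj a b → b ∈ R' ∪ K'' := by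
        intro a ha b hab
        rcases hclosed a ha.1 b hab with h | h
        · by_cases hbW : b ∈ Wl
          · exact Or.inr (Or.inr hbW)
          · exact Or.inl ⟨h, hbW⟩
        · exact Or.inr (Or.inl h)
      have hK''conn : (G.induce K'').Connected :=
        connected_induce_union K Wl hKne.2 (fun s hs => hs.2)
      obtain ⟨c', p1, p2, p3, p4⟩ := ih R' K'' (1 - κ) hsscard hdisj' hclosed'
        (Or.inr ⟨hK''conn, hKne.1.mono Set.subset_union_left⟩)
      have hother : (1 : Fin 2) - (1 - κ) = κ := other_other κ
      refine ⟨fun v => if v ∈ T then some (1 - κ) else c' v, ?_, ?_, ?_, ?_⟩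
      · intro v hv
        have hvT : v ∉ T := fun h => hv (hTsub h).1
        simp only [hvT, if_false]
        exact p1 v (fun h' => hv h'.1)
      · -- satisfaction of non-wall vertices of R
        intro v hv hvnw
        have hvW : v ∉ Wl := fun h => hvnw h.2
        have hvR' : v ∈ R' := ⟨hv, hvW⟩
        have hvT : v ∉ T := fun h => hvW (hTsub h)
        by_cases hvW2 : ∃ k ∈ K'', G.Adj k v
        · obtain ⟨x, hx, hcx, hux⟩ := p4 v hvR' hvW2
          rw [hother] at hcx hux
          have hxT : x ∉ T := by
            intro hxT
            have hxR' : x ∈ R' := by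
              by_contra h'
              rw [p1 x h'] at hcx
              cases hcx
            exact hxR'.2 (hTsub hxT)
          refine ⟨x, hx, κ, by simp only [hxT, if_false]; exact hcx, ?_⟩
          intro u hu hcu
          by_cases huT : u ∈ T
          · simp only [huT, if_true] at hcu
            exact absurd (Option.some_inj.mp hcu) (other_ne κ)
          · simp only [huT, if_false] at hcu
            exact hux u hu hcu
        · obtain ⟨w', hw', col, hcol, huniq⟩ := p2 v hvR' hvW2
          have hwT : w' ∉ T := by
            intro hwT
            have hwR' : w' ∈ R' := by
              by_contra h'
              rw [p1 w' h'] at hcol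
              cases hcol
            exact hwR'.2 (hTsub hwT)
          refine ⟨w', hw', col, by simp only [hwT, if_false]; exact hcol, ?_⟩
          intro u hu hcu
          have huT : u ∉ T := by
            intro huT
            have huW : u ∈ Wl := hTsub huT
            rcases mem_closedNbhd.mp hu with rfl | h
            · exact hvW huW
            · exact hvW2 ⟨u, Or.inr huW, h.symm⟩
          simp only [huT, if_false] at hcu
          exact huniq u hu hcu
      · -- wall vertices avoid κ
        intro v hv hex
        have hvW : v ∈ Wl := ⟨hv, hex⟩
        by_cases hvT : v ∈ T
        · simp only [hvT, if_true]
          intro h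
          exact (other_ne κ) (Option.some_inj.mp h)
        · simp only [hvT, if_false]
          rw [p1 v (fun h' => h'.2 hvW)]
          exact fun h => by cases h
      · -- wall vertices have a unique (1-κ)-witness
        intro v hv hex
        have hvW : v ∈ Wl := ⟨hv, hex⟩
        obtain ⟨x, hxT, hxcond, hxuniq⟩ := hT v hvW
        have hxN : x ∈ closedNbhd G v := by
          rw [mem_closedNbhd]
          rcases hxcond with rfl | h
          · exact Or.inl rfl
          · exact Or.inr h
        refine ⟨x, hxN, by simp only [hxT, if_true], ?_⟩
        intro u hu hcu
        by_cases huT : u ∈ T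
        · apply hxuniq u huT
          rcases mem_closedNbhd.mp hu with rfl | h
          · exact Or.inl rfl
          · exact Or.inr h
        · exfalso
          simp only [huT, if_false] at hcu
          have huR' : u ∈ R' := by
            by_contra h'
            rw [p1 u h'] at hcu
            cases hcu
          have huW2 : ∃ k ∈ K'', G.Adj k u := by
            rcases mem_closedNbhd.mp hu with rfl | h
            · exact absurd (huR'.2 hvW) not_false
            · exact ⟨v, Or.inr hvW, h⟩
          exact (p3 u huR' huW2) hcu


end CFProof

/-- every outerplanar graph admits a closed-neighborhood conflict-free
coloring with two colors. -/
theorem outerplanar_cf_two_colorable {V : Type*} [Fintype V] (G : SimpleGraph V)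
    (hG : IsOuterplanar G) :
    ∃ c : V → Option (Fin 2), IsCFColoring G 2 c := by
  classical
  obtain ⟨hK4, hK23⟩ := hG
  obtain ⟨c, p1, p2, p3, p4⟩ := CFProof.master hK4 hK23 (Set.univ : Set V).ncard
    Set.univ ∅ 0 le_rfl (by simp) (by simp) (Or.inl rfl)
  exact ⟨c, fun v => p2 v (Set.mem_univ v) (by simp)⟩
end

section
/- For any graph G obtained from a graph H by attaching a pendant vertex to every vertex of H and subdividing every edge of H with a new vertex, the open-neighborhood conflict-free chromatic number of G equals the chromatic number of H, and G is bipartite; moreover G is planar if H is planar. -/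
open SimpleGraph

/-- An open-neighborhood conflict-free `k`-coloring. -/
def IsOpenCFColoring {V : Type*} (G : SimpleGraph V) (k : ℕ) (c : V → Option (Fin k)) : Prop :=
  ∀ v : V, ∃ w ∈ G.neighborSet v, ∃ col : Fin k, c w = some col ∧
    ∀ u ∈ G.neighborSet v, c u = some col → u = w

/-- Planarity, via Wagner's characterization. -/
def IsPlanar {V : Type*} (G : SimpleGraph V) : Prop :=
  ¬ HasMinor G (⊤ : SimpleGraph (Fin 5)) ∧
  ¬ HasMinor G (completeBipartiteGraph (Fin 3) (Fin 3))

/-- The graph obtained from `H` by attaching a pendant vertex `Sum.inr (Sum.inl v)` to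
every original vertex `Sum.inl v`, and subdividing every edge `e` by a new midpoint
vertex `Sum.inr (Sum.inr e)`. -/
def pendantSubdiv {V : Type*} (H : SimpleGraph V) :
    SimpleGraph (V ⊕ (V ⊕ H.edgeSet)) :=
  SimpleGraph.fromRel (fun x y =>
    match x, y with
    | Sum.inl v, Sum.inr (Sum.inl w) => v = w
    | Sum.inl v, Sum.inr (Sum.inr e) => v ∈ (e : Sym2 V)
    | _, _ => False)



section Aux
variable {V : Type*} {H : SimpleGraph V}

lemma ps_adj_iff (a b : V ⊕ (V ⊕ H.edgeSet)) :
    (pendantSubdiv H).Adj a b ↔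
    (∃ v, a = Sum.inl v ∧ b = Sum.inr (Sum.inl v)) ∨
    (∃ v, b = Sum.inl v ∧ a = Sum.inr (Sum.inl v)) ∨
    (∃ v, ∃ e : H.edgeSet, v ∈ (e : Sym2 V) ∧ a = Sum.inl v ∧ b = Sum.inr (Sum.inr e)) ∨
    (∃ v, ∃ e : H.edgeSet, v ∈ (e : Sym2 V) ∧ b = Sum.inl v ∧ a = Sum.inr (Sum.inr e)) := by
  rw [pendantSubdiv, fromRel_adj]
  constructor
  · rintro ⟨hne, h | h⟩
    · match a, b with
      | Sum.inl v, Sum.inr (Sum.inl w) => exact Or.inl ⟨v, rfl, by simp_all⟩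
      | Sum.inl v, Sum.inr (Sum.inr e) => exact Or.inr (Or.inr (Or.inl ⟨v, e, h, rfl, rfl⟩))
    · match b, a with
      | Sum.inl v, Sum.inr (Sum.inl w) => exact Or.inr (Or.inl ⟨v, by simp_all, by simp_all⟩)
      | Sum.inl v, Sum.inr (Sum.inr e) => exact Or.inr (Or.inr (Or.inr ⟨v, e, h, rfl, rfl⟩))
  · rintro (⟨v, rfl, rfl⟩ | ⟨v, rfl, rfl⟩ | ⟨v, e, he, rfl, rfl⟩ | ⟨v, e, he, rfl, rfl⟩)
    · exact ⟨by simp, Or.inl rfl⟩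
    · exact ⟨by simp, Or.inr rfl⟩
    · exact ⟨by simp, Or.inl he⟩
    · exact ⟨by simp, Or.inr he⟩

lemma ps_adj_pendant {a : V ⊕ (V ⊕ H.edgeSet)} {v : V} :
    (pendantSubdiv H).Adj a (Sum.inr (Sum.inl v)) ↔ a = Sum.inl v := by
  rw [ps_adj_iff]; constructor
  · rintro (⟨w, rfl, h⟩ | ⟨w, h, _⟩ | ⟨w, e, _, _, h⟩ | ⟨w, e, _, h, _⟩) <;> simp_all
  · rintro rfl; exact Or.inl ⟨v, rfl, rfl⟩

lemma ps_adj_mid {a : V ⊕ (V ⊕ H.edgeSet)} {e : H.edgeSet} :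
    (pendantSubdiv H).Adj a (Sum.inr (Sum.inr e)) ↔ ∃ v, a = Sum.inl v ∧ v ∈ (e : Sym2 V) := by
  rw [ps_adj_iff]; constructor
  · rintro (⟨w, rfl, h⟩ | ⟨w, h, _⟩ | ⟨w, e', he, rfl, h⟩ | ⟨w, e', _, h, _⟩) <;> simp_all
  · rintro ⟨v, rfl, hv⟩; exact Or.inr (Or.inr (Or.inl ⟨v, e, hv, rfl, rfl⟩))

lemma ps_adj_inl {a : V ⊕ (V ⊕ H.edgeSet)} {v : V} :
    (pendantSubdiv H).Adj a (Sum.inl v) ↔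
      a = Sum.inr (Sum.inl v) ∨ ∃ e : H.edgeSet, a = Sum.inr (Sum.inr e) ∧ v ∈ (e : Sym2 V) := by
  rw [ps_adj_iff]; constructor
  · rintro (⟨w, _, h⟩ | ⟨w, h, rfl⟩ | ⟨w, e, _, _, h⟩ | ⟨w, e, he, h, rfl⟩) <;> simp_all
  · rintro (rfl | ⟨e, rfl, hv⟩)
    · exact Or.inr (Or.inl ⟨v, rfl, rfl⟩)
    · exact Or.inr (Or.inr (Or.inr ⟨v, e, hv, rfl, rfl⟩))

lemma ps_no_inr_adj (x y : V ⊕ H.edgeSet) :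
    ¬ (pendantSubdiv H).Adj (Sum.inr x) (Sum.inr y) := by
  rw [ps_adj_iff]
  rintro (⟨v, h1, h2⟩ | ⟨v, h1, h2⟩ | ⟨v, e, _, h1, h2⟩ | ⟨v, e, _, h1, h2⟩) <;> simp_all

/-- In a connected induced subgraph with at least two vertices, every vertex
has a neighbor inside the set. -/

lemma exists_neighbor_of_connected {V' : Type*} {G : SimpleGraph V'} {S : Set V'}
    (hc : (G.induce S).Connected) {a b : V'} (ha : a ∈ S) (hb : b ∈ S) (hab : a ≠ b) :
    ∃ q ∈ S, G.Adj a q := by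
  obtain ⟨p⟩ := hc.preconnected ⟨a, ha⟩ ⟨b, hb⟩
  cases p with
  | nil => exact absurd rfl hab
  | @cons _ q _ h p => exact ⟨q.val, q.2, h⟩

def touches : (V ⊕ (V ⊕ H.edgeSet)) → V → Prop :=
  Sum.elim (fun x u => x = u) (Sum.elim (fun x u => x = u) (fun e u => u ∈ (e : Sym2 V)))

lemma adj_of_mem_mem {e : H.edgeSet} {u v : V} (hu : u ∈ (e : Sym2 V)) (hv : v ∈ (e : Sym2 V))
    (huv : u ≠ v) : H.Adj u v := by
  have : (e : Sym2 V) = s(u, v) := (Sym2.mem_and_mem_iff huv).mp ⟨hu, hv⟩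
  have he := e.2
  rwa [this, SimpleGraph.mem_edgeSet] at he

lemma ps_colorable_two : (pendantSubdiv H).Colorable 2 := by
  refine ⟨⟨Sum.elim (fun _ => 0) (fun _ => 1), ?_⟩⟩
  intro a b hab
  rw [ps_adj_iff] at hab
  rcases hab with ⟨v, rfl, rfl⟩ | ⟨v, rfl, rfl⟩ | ⟨v, e, _, rfl, rfl⟩ | ⟨v, e, _, rfl, rfl⟩ <;> simp

lemma walk_proj {S : Set (V ⊕ (V ⊕ H.edgeSet))} {T : Set V}
    (hT : ∀ v, Sum.inl v ∈ S → v ∈ T) {a b : ↑S}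
    (p : ((pendantSubdiv H).induce S).Walk a b) :
    ∀ u v (hu : u ∈ T) (hv : v ∈ T), touches a.val u → touches b.val v →
      (H.induce T).Reachable ⟨u, hu⟩ ⟨v, hv⟩ := by
  induction p with
  | @nil a =>
    intro u v hu hv ha hb
    obtain ⟨(x | x | e), hx⟩ := a
    · obtain rfl : x = u := ha
      obtain rfl : x = v := hb
      exact Reachable.refl _
    · obtain rfl : x = u := ha
      obtain rfl : x = v := hb
      exact Reachable.refl _
    · have hu' : u ∈ (e : Sym2 V) := ha
      have hv' : v ∈ (e : Sym2 V) := hb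
      by_cases huv : u = v
      · subst huv; exact Reachable.refl _
      · have hA : H.Adj u v := adj_of_mem_mem hu' hv' huv
        exact Adj.reachable (show (H.induce T).Adj ⟨u, hu⟩ ⟨v, hv⟩ from hA)
  | @cons a c b h p ih =>
    intro u v hu hv ha hb
    have h' : (pendantSubdiv H).Adj a.val c.val := h
    rcases (ps_adj_iff a.val c.val).mp h' with
      ⟨x, hax, hcx⟩ | ⟨x, hcx, hax⟩ | ⟨x, e, hxe, hax, hcx⟩ | ⟨x, e, hxe, hcx, hax⟩
    · rw [hax] at ha
      obtain rfl : x = u := ha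
      exact ih x v hu hv (by rw [hcx]; exact rfl) hb
    · rw [hax] at ha
      obtain rfl : x = u := ha
      exact ih x v hu hv (by rw [hcx]; exact rfl) hb
    · rw [hax] at ha
      obtain rfl : x = u := ha
      exact ih x v hu hv (by rw [hcx]; exact hxe) hb
    · rw [hax] at ha
      have hue : u ∈ (e : Sym2 V) := ha
      have hxT : x ∈ T := hT x (hcx ▸ c.2)
      have hrest : (H.induce T).Reachable ⟨x, hxT⟩ ⟨v, hv⟩ :=
        ih x v hxT hv (by rw [hcx]; exact rfl) hb
      by_cases hux : u = x
      · subst hux; exact hrest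
      · have hA : H.Adj u x := adj_of_mem_mem hue hxe hux
        exact (Adj.reachable (show (H.induce T).Adj ⟨u, hu⟩ ⟨x, hxT⟩ from hA)).trans hrest

lemma ps_minor_transfer {W : Type*} {K : SimpleGraph W}
    (h3 : ∀ w : W, ∃ a b c2, K.Adj w a ∧ K.Adj w b ∧ K.Adj w c2 ∧ a ≠ b ∧ a ≠ c2 ∧ b ≠ c2)
    (hm : HasMinor (pendantSubdiv H) K) : HasMinor H K := by
  classical
  obtain ⟨f, hne, hconn, hdisj, hadj⟩ := hm
  have hdisj' : ∀ {w w' : W} {z}, w ≠ w' → z ∈ f w → z ∈ f w' → False := by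
    intro w w' z hww hz hz'
    exact Set.disjoint_left.mp (hdisj hww) hz hz'
  -- a branch set containing a pendant contains the attachment vertex
  have claim_pend : ∀ (w : W) (x : V), Sum.inr (Sum.inl x) ∈ f w → Sum.inl x ∈ f w := by
    intro w x hx
    by_cases hsing : ∃ z ∈ f w, z ≠ Sum.inr (Sum.inl x)
    · obtain ⟨z, hz, hzx⟩ := hsing
      obtain ⟨q, hq, hq'⟩ := exists_neighbor_of_connected (hconn w) hx hz (Ne.symm hzx)
      have : q = Sum.inl x := ps_adj_pendant.mp hq'.symm
      exact this ▸ hq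
    · push_neg at hsing
      exfalso
      obtain ⟨w1, w2, w3, hw1, hw2, hw3, h12, h13, h23⟩ := h3 w
      have get : ∀ w', K.Adj w w' → Sum.inl x ∈ f w' := by
        intro w' hww'
        obtain ⟨a, haw, b, hbw, hab⟩ := hadj hww'
        have ha := hsing a haw
        subst ha
        have : b = Sum.inl x := ps_adj_pendant.mp hab.symm
        exact this ▸ hbw
      exact hdisj' h12 (get w1 hw1) (get w2 hw2)
  -- a branch set containing a midpoint contains an endpoint
  have claim_mid : ∀ (w : W) (e : H.edgeSet), Sum.inr (Sum.inr e) ∈ f w →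
      ∃ y, y ∈ (e : Sym2 V) ∧ Sum.inl y ∈ f w := by
    intro w e hx
    by_cases hsing : ∃ z ∈ f w, z ≠ Sum.inr (Sum.inr e)
    · obtain ⟨z, hz, hzx⟩ := hsing
      obtain ⟨q, hq, hq'⟩ := exists_neighbor_of_connected (hconn w) hx hz (Ne.symm hzx)
      obtain ⟨y, rfl, hy⟩ := ps_adj_mid.mp hq'.symm
      exact ⟨y, hy, hq⟩
    · push_neg at hsing
      exfalso
      obtain ⟨w1, w2, w3, hw1, hw2, hw3, h12, h13, h23⟩ := h3 w
      have get : ∀ w', K.Adj w w' → ∃ y, y ∈ (e : Sym2 V) ∧ Sum.inl y ∈ f w' := by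
        intro w' hww'
        obtain ⟨a, haw, b, hbw, hab⟩ := hadj hww'
        have ha := hsing a haw
        subst ha
        obtain ⟨y, rfl, hy⟩ := ps_adj_mid.mp hab.symm
        exact ⟨y, hy, hbw⟩
      obtain ⟨y1, hy1, hm1⟩ := get w1 hw1
      obtain ⟨y2, hy2, hm2⟩ := get w2 hw2
      obtain ⟨y3, hy3, hm3⟩ := get w3 hw3
      obtain ⟨u1, u2, he⟩ : ∃ u1 u2, (e : Sym2 V) = s(u1, u2) :=
        Sym2.ind (fun x y => ⟨x, y, rfl⟩) (e : Sym2 V)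
      rw [he, Sym2.mem_iff] at hy1 hy2 hy3
      have htwo : y1 = y2 ∨ y1 = y3 ∨ y2 = y3 := by
        rcases hy1 with rfl | rfl <;> rcases hy2 with rfl | rfl <;>
          rcases hy3 with rfl | rfl <;> tauto
      rcases htwo with h | h | h
      · exact hdisj' h12 hm1 (h ▸ hm2)
      · exact hdisj' h13 hm1 (h ▸ hm3)
      · exact hdisj' h23 hm2 (h ▸ hm3)
  refine ⟨fun w => {v | Sum.inl v ∈ f w}, ?_, ?_, ?_, ?_⟩
  · -- nonempty
    intro w
    obtain ⟨a, haw⟩ := hne w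
    obtain (v | x | e) := a
    · exact ⟨v, haw⟩
    · exact ⟨x, claim_pend w x haw⟩
    · obtain ⟨y, -, hy⟩ := claim_mid w e haw
      exact ⟨y, hy⟩
  · -- connected
    intro w
    have hnonempty : Nonempty ↑{v | Sum.inl v ∈ f w} := by
      obtain ⟨a, haw⟩ := hne w
      obtain (v | x | e) := a
      · exact ⟨v, haw⟩
      · exact ⟨x, claim_pend w x haw⟩
      · obtain ⟨y, -, hy⟩ := claim_mid w e haw
        exact ⟨⟨y, hy⟩⟩
    haveI := hnonempty
    refine Connected.mk ?_
    intro a b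
    obtain ⟨u, hu⟩ := a
    obtain ⟨v, hv⟩ := b
    obtain ⟨p⟩ := (hconn w).preconnected ⟨Sum.inl u, hu⟩ ⟨Sum.inl v, hv⟩
    exact walk_proj (fun _ h => h) p u v hu hv rfl rfl
  · -- disjoint
    intro w w' hww
    rw [Set.disjoint_left]
    intro v hv hv'
    exact hdisj' hww hv hv'
  · -- adjacency
    intro w w' hww'
    obtain ⟨a, haw, b, hbw, hab⟩ := hadj hww'
    have hne_ww' : w ≠ w' := hww'.ne
    rcases (ps_adj_iff a b).mp hab with
      ⟨v, rfl, rfl⟩ | ⟨v, rfl, rfl⟩ | ⟨v, e, hve, rfl, rfl⟩ | ⟨v, e, hve, rfl, rfl⟩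
    · exact absurd (claim_pend w' v hbw) (fun h => hdisj' hne_ww' haw h)
    · exact absurd (claim_pend w v haw) (fun h => hdisj' hne_ww' h hbw)
    · obtain ⟨y, hye, hy⟩ := claim_mid w' e hbw
      have hvy : v ≠ y := by
        rintro rfl
        exact hdisj' hne_ww' haw hy
      exact ⟨v, haw, y, hy, adj_of_mem_mem hve hye hvy⟩
    · obtain ⟨y, hye, hy⟩ := claim_mid w e haw
      have hvy : y ≠ v := by
        rintro rfl
        exact hdisj' hne_ww' hy hbw
      exact ⟨y, hy, v, hbw, adj_of_mem_mem hye hve hvy⟩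

lemma h3_K5 : ∀ w : Fin 5, ∃ a b c2, (⊤ : SimpleGraph (Fin 5)).Adj w a ∧
    (⊤ : SimpleGraph (Fin 5)).Adj w b ∧ (⊤ : SimpleGraph (Fin 5)).Adj w c2 ∧
    a ≠ b ∧ a ≠ c2 ∧ b ≠ c2 := by decide

lemma h3_K33 : ∀ w : Fin 3 ⊕ Fin 3, ∃ a b c2,
    (completeBipartiteGraph (Fin 3) (Fin 3)).Adj w a ∧
    (completeBipartiteGraph (Fin 3) (Fin 3)).Adj w b ∧
    (completeBipartiteGraph (Fin 3) (Fin 3)).Adj w c2 ∧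
    a ≠ b ∧ a ≠ c2 ∧ b ≠ c2 := by
  rintro (x | x)
  · exact ⟨Sum.inr 0, Sum.inr 1, Sum.inr 2, Or.inl ⟨rfl, rfl⟩, Or.inl ⟨rfl, rfl⟩,
      Or.inl ⟨rfl, rfl⟩, by decide, by decide, by decide⟩
  · exact ⟨Sum.inl 0, Sum.inl 1, Sum.inl 2, Or.inr ⟨rfl, rfl⟩, Or.inr ⟨rfl, rfl⟩,
      Or.inr ⟨rfl, rfl⟩, by decide, by decide, by decide⟩

lemma ps_forward {k : ℕ} {c : (V ⊕ (V ⊕ H.edgeSet)) → Option (Fin k)}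
    (hc : IsOpenCFColoring (pendantSubdiv H) k c) : H.Colorable k := by
  have hcol : ∀ v : V, ∃ col : Fin k, c (Sum.inl v) = some col := by
    intro v
    obtain ⟨w, hw, col, hcw, -⟩ := hc (Sum.inr (Sum.inl v))
    rw [mem_neighborSet] at hw
    have := ps_adj_pendant.mp hw.symm
    exact ⟨col, this ▸ hcw⟩
  choose h hh using hcol
  refine ⟨⟨h, ?_⟩⟩
  intro u v huv hne
  set e : H.edgeSet := ⟨s(u, v), huv⟩ with he
  obtain ⟨w, hw, col, hcw, huniq⟩ := hc (Sum.inr (Sum.inr e))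
  rw [mem_neighborSet] at hw
  obtain ⟨x, rfl, hx⟩ := ps_adj_mid.mp hw.symm
  have hmem : ∀ y : V, y ∈ (e : Sym2 V) ↔ y = u ∨ y = v := by
    intro y; rw [he]; exact Sym2.mem_iff
  have hcolx : col = h x := by
    have := hh x; rw [hcw] at this; exact Option.some_inj.mp this
  rcases (hmem x).mp hx with rfl | rfl
  · -- x = u, show contradiction from h u = h v
    have hv : Sum.inl v ∈ (pendantSubdiv H).neighborSet (Sum.inr (Sum.inr e)) := by
      rw [mem_neighborSet]
      exact (ps_adj_mid.mpr ⟨v, rfl, (hmem v).mpr (Or.inr rfl)⟩).symm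
    have := huniq (Sum.inl v) hv (by rw [hh v, hcolx, hne])
    exact huv.ne (Sum.inl.inj this).symm
  · have hv : Sum.inl u ∈ (pendantSubdiv H).neighborSet (Sum.inr (Sum.inr e)) := by
      rw [mem_neighborSet]
      exact (ps_adj_mid.mpr ⟨u, rfl, (hmem u).mpr (Or.inl rfl)⟩).symm
    have := huniq (Sum.inl u) hv (by rw [hh u, hcolx, hne])
    exact huv.ne (Sum.inl.inj this)

lemma ps_backward {k : ℕ} (hk : H.Colorable k) :
    ∃ c : (V ⊕ (V ⊕ H.edgeSet)) → Option (Fin k),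
      IsOpenCFColoring (pendantSubdiv H) k c := by
  obtain ⟨col⟩ := hk
  refine ⟨Sum.elim (fun v => some (col v)) (Sum.elim (fun v => some (col v)) (fun _ => none)), ?_⟩
  rintro (v | v | e)
  · refine ⟨Sum.inr (Sum.inl v), ?_, col v, rfl, ?_⟩
    · rw [mem_neighborSet]; exact (ps_adj_pendant.mpr rfl)
    · rintro u hu hcu
      rw [mem_neighborSet] at hu
      rcases ps_adj_inl.mp hu.symm with rfl | ⟨e, rfl, -⟩
      · rfl
      · simp at hcu
  · refine ⟨Sum.inl v, ?_, col v, rfl, ?_⟩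
    · rw [mem_neighborSet]; exact (ps_adj_pendant.mpr rfl).symm
    · rintro u hu hcu
      rw [mem_neighborSet] at hu
      exact ps_adj_pendant.mp hu.symm
  · obtain ⟨u, v, huv⟩ : ∃ u v, (e : Sym2 V) = s(u, v) :=
      Sym2.ind (fun x y => ⟨x, y, rfl⟩) (e : Sym2 V)
    have hadj : H.Adj u v := by have := e.2; rwa [huv, SimpleGraph.mem_edgeSet] at this
    refine ⟨Sum.inl u, ?_, col u, rfl, ?_⟩
    · rw [mem_neighborSet]; exact (ps_adj_mid.mpr ⟨u, rfl, by rw [huv]; exact Sym2.mem_mk_left u v⟩).symm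
    · rintro w hw hcw
      rw [mem_neighborSet] at hw
      obtain ⟨x, rfl, hx⟩ := ps_adj_mid.mp hw.symm
      rw [huv, Sym2.mem_iff] at hx
      rcases hx with rfl | rfl
      · rfl
      · simp only [Sum.elim_inl, Option.some_inj] at hcw
        exact absurd (col.valid hadj) (by rw [hcw]; simp)

end Aux

/-- for the graph `G` obtained from `H` by attaching a pendant to each
vertex and subdividing each edge, the open-neighborhood conflict-free chromatic number
of `G` equals the chromatic number of `H` (for every `k`, `G` is open-neighborhood
conflict-free `k`-colorable iff `H` is properly `k`-colorable); moreover `G` is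
bipartite, and `G` is planar whenever `H` is. -/
theorem pendant_subdiv_open_cf_eq_chromatic {V : Type*} [Fintype V]
    (H : SimpleGraph V) :
    (∀ k : ℕ, (∃ c : (V ⊕ (V ⊕ H.edgeSet)) → Option (Fin k),
        IsOpenCFColoring (pendantSubdiv H) k c) ↔ H.Colorable k) ∧
    (pendantSubdiv H).Colorable 2 ∧
    (IsPlanar H → IsPlanar (pendantSubdiv H)) := by
  refine ⟨fun k => ⟨fun ⟨c, hc⟩ => ps_forward hc, ps_backward⟩, ps_colorable_two, ?_⟩
  rintro ⟨h5, h33⟩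
  exact ⟨fun hm => h5 (ps_minor_transfer h3_K5 hm),
    fun hm => h33 (ps_minor_transfer h3_K33 hm)⟩
end
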